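/- arXiv:1612.07435 — 7 statements merged into one kernel-verified Lean document; each statement's English description precedes it below -/
import Mathlib

section
/- For every y > 0, the complementary error function satisfies the two-sided bound (2/√π)·e^{-y²}/(y + √(y²+2)) < erfc(y) ≤ (2/√π)·e^{-y²}/(y + √(y² + 4/π)). -/
open Real MeasureTheory Filter Set

noncomputable def erf (y : ℝ) : ℝ := (2 / Real.sqrt π) * ∫ t in (0:ℝ)..y, Real.exp (-t ^ 2)

noncomputable def erfc (y : ℝ) : ℝ := (2 / Real.sqrt π) * ∫ t in Set.Ioi y, Real.exp (-t ^ 2)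

noncomputable def erfinv : ℝ → ℝ := Function.invFun erf


noncomputable def F (y : ℝ) : ℝ := ∫ t in Set.Ioi y, Real.exp (-t ^ 2)

lemma f_cont : Continuous (fun t : ℝ => Real.exp (-t ^ 2)) := by continuity

lemma f_int : Integrable (fun t : ℝ => Real.exp (-t ^ 2)) := by
  simpa using integrable_exp_neg_mul_sq (by norm_num : (0:ℝ) < 1)

lemma F_split (a b : ℝ) (hab : a ≤ b) :
    F a = (∫ t in Set.Ioc a b, Real.exp (-t ^ 2)) + F b := by
  rw [F, F, ← setIntegral_union (Set.Ioc_disjoint_Ioi le_rfl) measurableSet_Ioi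
    f_int.integrableOn f_int.integrableOn, Set.Ioc_union_Ioi_eq_Ioi hab]

lemma F_eq (y : ℝ) : F y = F 0 - ∫ t in (0:ℝ)..y, Real.exp (-t ^ 2) := by
  rcases le_total 0 y with h | h
  · have := F_split 0 y h
    rw [intervalIntegral.integral_of_le h]
    simp only [MeasureTheory.integral_Ioc_eq_integral_Ioo] at this ⊢
    linarith
  · have := F_split y 0 h
    rw [intervalIntegral.integral_symm, intervalIntegral.integral_of_le h]
    simp only [MeasureTheory.integral_Ioc_eq_integral_Ioo] at this ⊢
    linarith

lemma hasDerivAt_F (y : ℝ) : HasDerivAt F (-(Real.exp (-y ^ 2))) y := by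
  have : F = fun y => F 0 - ∫ t in (0:ℝ)..y, Real.exp (-t ^ 2) := funext F_eq
  rw [this]
  simpa [Pi.sub_def] using (hasDerivAt_const _ _).sub
    (intervalIntegral.integral_hasDerivAt_right f_int.intervalIntegrable
      (f_cont.stronglyMeasurableAtFilter _ _) f_cont.continuousAt)

lemma F_tendsto : Tendsto F atTop (nhds 0) := by
  have h := intervalIntegral_tendsto_integral_Ioi 0 (f_int.integrableOn) tendsto_id
  have : Tendsto (fun y => F 0 - ∫ t in (0:ℝ)..y, Real.exp (-t ^ 2)) atTop (nhds (F 0 - F 0)) :=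
    tendsto_const_nhds.sub h
  simpa [← F_eq] using this

lemma F_zero : F 0 = Real.sqrt π / 2 := by
  have := integral_gaussian_Ioi 1
  simpa [F] using this
noncomputable def gg (c y : ℝ) : ℝ := (Real.sqrt (y ^ 2 + c) - y) / c
noncomputable def hh (c y : ℝ) : ℝ := Real.exp (-y ^ 2) * gg c y
noncomputable def psi (c y : ℝ) : ℝ :=
  (y / Real.sqrt (y ^ 2 + c) - 1) / c - 2 * y * gg c y + 1

lemma sqrt_pos' {c y : ℝ} (hc : 0 < c) : 0 < Real.sqrt (y ^ 2 + c) :=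
  Real.sqrt_pos.2 (by positivity)

lemma sq_sqrt' {c y : ℝ} (hc : 0 < c) : Real.sqrt (y ^ 2 + c) ^ 2 = y ^ 2 + c :=
  Real.sq_sqrt (by positivity)

lemma hasDerivAt_hh {c : ℝ} (hc : 0 < c) (y : ℝ) :
    HasDerivAt (hh c) (Real.exp (-y ^ 2) * (psi c y - 1)) y := by
  have hs : (0:ℝ) < Real.sqrt (y ^ 2 + c) := sqrt_pos' hc
  have h1 : HasDerivAt (fun y : ℝ => y ^ 2 + c) (2 * y) y := by
    simpa using (hasDerivAt_pow 2 y).add_const c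
  have h2 : HasDerivAt (fun y : ℝ => Real.sqrt (y ^ 2 + c)) (y / Real.sqrt (y ^ 2 + c)) y := by
    have := (Real.hasDerivAt_sqrt (by positivity : y ^ 2 + c ≠ 0)).comp y h1
    refine this.congr_deriv ?_
    field_simp
  have h3 : HasDerivAt (gg c) ((y / Real.sqrt (y ^ 2 + c) - 1) / c) y :=
    (h2.sub (hasDerivAt_id y)).div_const c
  have h4 : HasDerivAt (fun y : ℝ => Real.exp (-y ^ 2)) (Real.exp (-y ^ 2) * (-2 * y)) y := by
    have : HasDerivAt (fun y : ℝ => -y ^ 2) (-2 * y) y := by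
      simpa [Pi.neg_def] using (hasDerivAt_pow 2 y).neg
    simpa using this.exp
  have := h4.mul h3
  refine this.congr_deriv ?_
  simp only [psi]
  ring

noncomputable def HH (c y : ℝ) : ℝ := hh c y - F y

lemma hasDerivAt_HH {c : ℝ} (hc : 0 < c) (y : ℝ) :
    HasDerivAt (HH c) (Real.exp (-y ^ 2) * psi c y) y := by
  have := (hasDerivAt_hh hc y).sub (hasDerivAt_F y)
  refine this.congr_deriv ?_
  ring

-- key algebraic identity: c * s * psi where s = sqrt (y^2+c)
lemma psi_key {c y : ℝ} (hc : 0 < c) :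
    c * Real.sqrt (y ^ 2 + c) * psi c y
      = -2 * y ^ 3 + (1 - 2 * c) * y + Real.sqrt (y ^ 2 + c) * (2 * y ^ 2 + c - 1) := by
  have hs : (0:ℝ) < Real.sqrt (y ^ 2 + c) := sqrt_pos' hc
  have hs2 : Real.sqrt (y ^ 2 + c) ^ 2 = y ^ 2 + c := sq_sqrt' hc
  have hs0 : Real.sqrt (y ^ 2 + c) ≠ 0 := ne_of_gt hs
  have hc0 : c ≠ 0 := ne_of_gt hc
  have h0 : c * Real.sqrt (y ^ 2 + c) * psi c y
      = y - Real.sqrt (y ^ 2 + c) - 2 * y * Real.sqrt (y ^ 2 + c) ^ 2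
        + 2 * y ^ 2 * Real.sqrt (y ^ 2 + c) + c * Real.sqrt (y ^ 2 + c) := by
    simp only [psi, gg]
    field_simp
    linear_combination (0 : ℝ) * hs2
  linear_combination h0 - 2 * y * hs2

lemma psi_two_pos {y : ℝ} (hy : 0 ≤ y) : 0 < psi 2 y := by
  have hc : (0:ℝ) < 2 := by norm_num
  have hs : (0:ℝ) < Real.sqrt (y ^ 2 + 2) := sqrt_pos' hc
  have hs2 : Real.sqrt (y ^ 2 + 2) ^ 2 = y ^ 2 + 2 := sq_sqrt' hc
  have key := psi_key (c := 2) (y := y) hc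
  set s := Real.sqrt (y ^ 2 + 2)
  -- need s*(2y²+1) > 2y³+3y ; (s(2y²+1))² - (2y³+3y)² = 2
  have h1 : (s * (2 * y ^ 2 + 1)) ^ 2 = (2 * y ^ 3 + 3 * y) ^ 2 + 2 := by
    nlinarith [hs2]
  have h2 : 2 * y ^ 3 + 3 * y ≥ 0 := by positivity
  have hab : 0 < s * (2 * y ^ 2 + 1) + (2 * y ^ 3 + 3 * y) := by positivity
  have h3 : s * (2 * y ^ 2 + 1) > 2 * y ^ 3 + 3 * y := by nlinarith
  have hcs : (0:ℝ) < 2 * s := by linarith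
  nlinarith

lemma psi_sign {c y : ℝ} (hc1 : 1 < c) (hc2 : c < 2) (hy : 0 ≤ y) :
    (y ^ 2 * (2 - c) ≤ (c - 1) ^ 2 → 0 ≤ psi c y) ∧
    ((c - 1) ^ 2 ≤ y ^ 2 * (2 - c) → psi c y ≤ 0) := by
  have hc : (0:ℝ) < c := by linarith
  have hs : (0:ℝ) < Real.sqrt (y ^ 2 + c) := sqrt_pos' hc
  have hs2 : Real.sqrt (y ^ 2 + c) ^ 2 = y ^ 2 + c := sq_sqrt' hc
  have key := psi_key (c := c) (y := y) hc
  set s := Real.sqrt (y ^ 2 + c)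
  have ha : 0 < s * (2 * y ^ 2 + c - 1) := by nlinarith
  have hb : 0 ≤ 2 * y ^ 3 + (2 * c - 1) * y := by nlinarith
  have hid : (s * (2 * y ^ 2 + c - 1)) ^ 2 - (2 * y ^ 3 + (2 * c - 1) * y) ^ 2
      = c * ((c - 2) * y ^ 2 + (c - 1) ^ 2) := by
    linear_combination (2 * y ^ 2 + c - 1) ^ 2 * hs2
  have hab : 0 < s * (2 * y ^ 2 + c - 1) + (2 * y ^ 3 + (2 * c - 1) * y) := by linarith
  have hcs : 0 < c * s := mul_pos hc hs
  constructor
  · intro h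
    have : (2 * y ^ 3 + (2 * c - 1) * y) ^ 2 ≤ (s * (2 * y ^ 2 + c - 1)) ^ 2 := by nlinarith
    have h4 : 2 * y ^ 3 + (2 * c - 1) * y ≤ s * (2 * y ^ 2 + c - 1) := by nlinarith
    nlinarith [hcs]
  · intro h
    have : (s * (2 * y ^ 2 + c - 1)) ^ 2 ≤ (2 * y ^ 3 + (2 * c - 1) * y) ^ 2 := by nlinarith
    have h4 : s * (2 * y ^ 2 + c - 1) ≤ 2 * y ^ 3 + (2 * c - 1) * y := by nlinarith
    nlinarith [hcs]
lemma exp_neg_sq_tendsto : Tendsto (fun y : ℝ => Real.exp (-y ^ 2)) atTop (nhds 0) :=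
  Real.tendsto_exp_atBot.comp (tendsto_neg_atTop_atBot.comp (tendsto_pow_atTop two_ne_zero))

lemma sqrt_le_add {c y : ℝ} (hc : 0 < c) (hy : 0 ≤ y) :
    Real.sqrt (y ^ 2 + c) ≤ y + Real.sqrt c := by
  rw [show y + Real.sqrt c = Real.sqrt ((y + Real.sqrt c) ^ 2) from
    (Real.sqrt_sq (by positivity)).symm]
  apply Real.sqrt_le_sqrt
  nlinarith [Real.sq_sqrt hc.le, Real.sqrt_nonneg c, mul_nonneg hy (Real.sqrt_nonneg c)]

lemma self_le_sqrt {c y : ℝ} (hc : 0 < c) (hy : 0 ≤ y) : y ≤ Real.sqrt (y ^ 2 + c) := by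
  have h := Real.sqrt_le_sqrt (show y ^ 2 ≤ y ^ 2 + c by linarith)
  rwa [Real.sqrt_sq hy] at h

lemma hh_nonneg {c y : ℝ} (hc : 0 < c) (hy : 0 ≤ y) : 0 ≤ hh c y := by
  have h := self_le_sqrt hc hy
  have : 0 ≤ gg c y := div_nonneg (by linarith) hc.le
  exact mul_nonneg (Real.exp_pos _).le this

lemma hh_tendsto {c : ℝ} (hc : 0 < c) : Tendsto (hh c) atTop (nhds 0) := by
  have hb : Tendsto (fun y : ℝ => Real.exp (-y ^ 2) * (Real.sqrt c / c)) atTop (nhds 0) := by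
    simpa using exp_neg_sq_tendsto.mul_const (Real.sqrt c / c)
  refine tendsto_of_tendsto_of_tendsto_of_le_of_le' tendsto_const_nhds hb ?_ ?_
  · filter_upwards [eventually_ge_atTop (0:ℝ)] with y hy using hh_nonneg hc hy
  · filter_upwards [eventually_ge_atTop (0:ℝ)] with y hy
    have h1 : Real.sqrt (y ^ 2 + c) - y ≤ Real.sqrt c := by
      have := sqrt_le_add hc hy; linarith
    have h2 : gg c y ≤ Real.sqrt c / c := div_le_div_of_nonneg_right h1 hc.le
    exact mul_le_mul_of_nonneg_left h2 (Real.exp_pos _).le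

lemma HH_tendsto {c : ℝ} (hc : 0 < c) : Tendsto (HH c) atTop (nhds 0) := by
  have := (hh_tendsto hc).sub F_tendsto
  simp only [sub_zero] at this
  exact this

lemma HH_cont {c : ℝ} (hc : 0 < c) : Continuous (HH c) :=
  continuous_iff_continuousAt.2 fun y => (hasDerivAt_HH hc y).continuousAt

lemma deriv_HH {c : ℝ} (hc : 0 < c) (y : ℝ) :
    deriv (HH c) y = Real.exp (-y ^ 2) * psi c y := (hasDerivAt_HH hc y).deriv

-- Lower bound core: for y > 0, hh 2 y < F y
lemma lower_core {y : ℝ} (hy : 0 < y) : hh 2 y < F y := by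
  have h2 : (0:ℝ) < 2 := by norm_num
  have hmono : StrictMonoOn (HH 2) (Set.Ici 0) := by
    apply strictMonoOn_of_deriv_pos (convex_Ici 0) (HH_cont h2).continuousOn
    intro x hx
    rw [interior_Ici] at hx
    rw [deriv_HH h2]
    exact mul_pos (Real.exp_pos _) (psi_two_pos (le_of_lt hx))
  have hmono' : MonotoneOn (HH 2) (Set.Ici 0) := by
    apply monotoneOn_of_deriv_nonneg (convex_Ici 0) (HH_cont h2).continuousOn
      (fun x hx => ((hasDerivAt_HH h2 x).differentiableAt).differentiableWithinAt)
    intro x hx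
    rw [interior_Ici] at hx
    rw [deriv_HH h2]
    exact (mul_pos (Real.exp_pos _) (psi_two_pos (le_of_lt hx))).le
  have hge : HH 2 (y + 1) ≤ 0 := by
    refine ge_of_tendsto (HH_tendsto h2) ?_
    filter_upwards [eventually_ge_atTop (y + 1)] with z hz
    exact hmono' (Set.mem_Ici.2 (by linarith)) (Set.mem_Ici.2 (by linarith)) hz
  have hlt : HH 2 y < HH 2 (y + 1) :=
    hmono (Set.mem_Ici.2 hy.le) (Set.mem_Ici.2 (by linarith)) (by linarith)
  have : HH 2 y < 0 := lt_of_lt_of_le hlt hge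
  simp only [HH] at this
  linarith

lemma c_facts : 1 < 4 / π ∧ 4 / π < 2 := by
  constructor
  · rw [lt_div_iff₀ Real.pi_pos]; nlinarith [Real.pi_lt_four]
  · rw [div_lt_iff₀ Real.pi_pos]; nlinarith [Real.pi_gt_three]

lemma HH_zero : HH (4 / π) 0 = 0 := by
  have hπ : (0:ℝ) < π := Real.pi_pos
  have hsπ : 0 < Real.sqrt π := Real.sqrt_pos.2 hπ
  have hs2 : Real.sqrt π ^ 2 = π := Real.sq_sqrt hπ.le
  have h4 : Real.sqrt (4 / π) = 2 / Real.sqrt π := by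
    rw [show (4:ℝ) / π = (2 / Real.sqrt π) ^ 2 by rw [div_pow, hs2]; norm_num]
    exact Real.sqrt_sq (by positivity)
  simp only [HH, hh, gg, F_zero]
  rw [show (0:ℝ) ^ 2 + 4 / π = 4 / π by ring, h4]
  norm_num
  field_simp
  nlinarith [hs2]

lemma upper_core {y : ℝ} (hy : 0 ≤ y) : F y ≤ hh (4 / π) y := by
  obtain ⟨hc1, hc2⟩ := c_facts
  set c := 4 / π with hcdef
  have hc : 0 < c := by linarith
  set t₀ := Real.sqrt ((c - 1) ^ 2 / (2 - c)) with ht0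
  have ht0nn : 0 ≤ t₀ := Real.sqrt_nonneg _
  have ht0sq : t₀ ^ 2 = (c - 1) ^ 2 / (2 - c) := Real.sq_sqrt (div_nonneg (sq_nonneg _) (by linarith))
  have hmono : MonotoneOn (HH c) (Set.Icc 0 t₀) := by
    apply monotoneOn_of_deriv_nonneg (convex_Icc 0 t₀) (HH_cont hc).continuousOn
      (fun x hx => ((hasDerivAt_HH hc x).differentiableAt).differentiableWithinAt)
    intro x hx
    rw [interior_Icc] at hx
    rw [deriv_HH hc]
    have hx0 : 0 ≤ x := le_of_lt hx.1
    have hxsq : x ^ 2 * (2 - c) ≤ (c - 1) ^ 2 := by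
      have hxx : x ^ 2 ≤ t₀ ^ 2 := by nlinarith [hx.2, hx.1, ht0nn]
      rw [ht0sq] at hxx
      rw [← le_div_iff₀ (by linarith : (0:ℝ) < 2 - c)]
      exact hxx
    exact mul_nonneg (Real.exp_pos _).le ((psi_sign hc1 hc2 hx0).1 hxsq)
  have hanti : AntitoneOn (HH c) (Set.Ici t₀) := by
    apply antitoneOn_of_deriv_nonpos (convex_Ici t₀) (HH_cont hc).continuousOn
      (fun x hx => ((hasDerivAt_HH hc x).differentiableAt).differentiableWithinAt)
    intro x hx
    rw [interior_Ici] at hx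
    rw [deriv_HH hc]
    have hx0 : 0 ≤ x := le_trans ht0nn (le_of_lt hx)
    have hxsq : (c - 1) ^ 2 ≤ x ^ 2 * (2 - c) := by
      have hxx : t₀ ^ 2 ≤ x ^ 2 := by nlinarith [le_of_lt (Set.mem_Ioi.mp hx), ht0nn]
      rw [ht0sq] at hxx
      rw [div_le_iff₀ (by linarith : (0:ℝ) < 2 - c)] at hxx
      linarith
    exact mul_nonpos_of_nonneg_of_nonpos (Real.exp_pos _).le
      ((psi_sign hc1 hc2 hx0).2 hxsq)
  have key : 0 ≤ HH c y := by
    rcases le_total y t₀ with h | h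
    · have := hmono (Set.mem_Icc.2 ⟨le_refl 0, ht0nn⟩) (Set.mem_Icc.2 ⟨hy, h⟩) hy
      rw [HH_zero] at this
      exact this
    · refine le_of_tendsto (HH_tendsto hc) ?_
      filter_upwards [eventually_ge_atTop y] with z hz
      exact hanti (Set.mem_Ici.2 h) (Set.mem_Ici.2 (le_trans h hz)) hz
  simp only [HH] at key
  linarith
theorem erfc_two_sided_bound (y : ℝ) (hy : 0 < y) :
    (2 / Real.sqrt π) * Real.exp (-y ^ 2) / (y + Real.sqrt (y ^ 2 + 2)) < erfc y ∧
    erfc y ≤ (2 / Real.sqrt π) * Real.exp (-y ^ 2) / (y + Real.sqrt (y ^ 2 + 4 / π)) := by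
  have hπ : (0:ℝ) < π := Real.pi_pos
  have hsπ : 0 < Real.sqrt π := Real.sqrt_pos.2 hπ
  have hfac : 0 < 2 / Real.sqrt π := by positivity
  have herfc : erfc y = (2 / Real.sqrt π) * F y := rfl
  have hcπ : (0:ℝ) < 4 / π := by positivity
  constructor
  · have hs : 0 < Real.sqrt (y ^ 2 + 2) := sqrt_pos' (by norm_num)
    have hs2 : Real.sqrt (y ^ 2 + 2) ^ 2 = y ^ 2 + 2 := sq_sqrt' (by norm_num)
    have hys : 0 < y + Real.sqrt (y ^ 2 + 2) := by linarith
    have heq : Real.exp (-y ^ 2) / (y + Real.sqrt (y ^ 2 + 2)) = hh 2 y := by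
      rw [hh, gg, ← mul_div_assoc]
      rw [div_eq_div_iff hys.ne' (by norm_num : (2:ℝ) ≠ 0)]
      linear_combination (- Real.exp (-y ^ 2)) * hs2
    rw [mul_div_assoc, heq, herfc]
    exact mul_lt_mul_of_pos_left (lower_core hy) hfac
  · have hs : 0 < Real.sqrt (y ^ 2 + 4 / π) := sqrt_pos' hcπ
    have hs2 : Real.sqrt (y ^ 2 + 4 / π) ^ 2 = y ^ 2 + 4 / π := sq_sqrt' hcπ
    have hys : 0 < y + Real.sqrt (y ^ 2 + 4 / π) := by linarith
    have heq : Real.exp (-y ^ 2) / (y + Real.sqrt (y ^ 2 + 4 / π)) = hh (4 / π) y := by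
      rw [hh, gg, ← mul_div_assoc]
      rw [div_eq_div_iff hys.ne' (by positivity : (4 / π : ℝ) ≠ 0)]
      linear_combination (- Real.exp (-y ^ 2)) * hs2
    rw [mul_div_assoc, heq, herfc]
    exact mul_le_mul_of_nonneg_left (upper_core hy.le) hfac.le
end

section
/- For every q > 0, one has 2e^{-q²}/(√π · q · erfc(q)) < 1 + √(1 + 2/q²). -/
open Real MeasureTheory Filter Set

noncomputable def erfcAuxF (t : ℝ) : ℝ := Real.exp (-t ^ 2) / (t + Real.sqrt (t ^ 2 + 2))

noncomputable def erfcAuxF' (t : ℝ) : ℝ :=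
  (Real.exp (-t ^ 2) * (-(2 * t) * (t + Real.sqrt (t ^ 2 + 2))
    - (1 + t / Real.sqrt (t ^ 2 + 2)))) / (t + Real.sqrt (t ^ 2 + 2)) ^ 2

lemma erfcAux_sqrt_pos (t : ℝ) : 0 < Real.sqrt (t ^ 2 + 2) :=
  Real.sqrt_pos.2 (by positivity)

lemma erfcAux_lt_sqrt (t : ℝ) : t < Real.sqrt (t ^ 2 + 2) := by
  rcases le_or_gt t 0 with h | h
  · exact lt_of_le_of_lt h (erfcAux_sqrt_pos t)
  · have : t = Real.sqrt (t ^ 2) := by rw [Real.sqrt_sq h.le]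
    rw [this]
    exact Real.sqrt_lt_sqrt (sq_nonneg t) (by nlinarith [Real.sq_sqrt (by positivity : (0:ℝ) ≤ t^2)])

lemma erfcAux_denom_pos (t : ℝ) : 0 < t + Real.sqrt (t ^ 2 + 2) := by
  have h := erfcAux_lt_sqrt (-t)
  have h2 : (-t) ^ 2 = t ^ 2 := by ring
  rw [h2] at h
  linarith

lemma erfcAux_hasDerivAt (t : ℝ) : HasDerivAt erfcAuxF (erfcAuxF' t) t := by
  have hs := erfcAux_sqrt_pos t
  have hd := erfcAux_denom_pos t
  have h1 : HasDerivAt (fun u : ℝ => Real.exp (-u ^ 2)) (Real.exp (-t ^ 2) * (-(2 * t))) t := by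
    have : HasDerivAt (fun u : ℝ => -u ^ 2) (-(2 * t)) t := by
      exact (hasDerivAt_pow 2 t).neg.congr_deriv (by norm_num)
    refine ((Real.hasDerivAt_exp (-t ^ 2)).comp t this).congr_deriv ?_; ring
  have h2 : HasDerivAt (fun u : ℝ => u + Real.sqrt (u ^ 2 + 2)) (1 + t / Real.sqrt (t ^ 2 + 2)) t := by
    have hinner : HasDerivAt (fun u : ℝ => u ^ 2 + 2) (2 * t) t := by
      simpa using (hasDerivAt_pow 2 t).add_const 2
    have hsq : HasDerivAt (fun u : ℝ => Real.sqrt (u ^ 2 + 2)) (1 / (2 * Real.sqrt (t ^ 2 + 2)) * (2 * t)) t :=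
      (Real.hasDerivAt_sqrt (by positivity)).comp t hinner
    have : 1 / (2 * Real.sqrt (t ^ 2 + 2)) * (2 * t) = t / Real.sqrt (t ^ 2 + 2) := by
      field_simp
    rw [this] at hsq
    exact (hasDerivAt_id t).add hsq
  have := h1.div h2 hd.ne'
  refine this.congr_deriv ?_
  unfold erfcAuxF'
  ring

lemma erfcAux_key (t : ℝ) (ht : 0 < t) :
    -Real.exp (-t ^ 2) < erfcAuxF' t ∧ erfcAuxF' t < 0 := by
  have hs := erfcAux_sqrt_pos t
  have hd := erfcAux_denom_pos t
  have hts := erfcAux_lt_sqrt t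
  have hs2 : Real.sqrt (t ^ 2 + 2) ^ 2 = t ^ 2 + 2 := Real.sq_sqrt (by positivity)
  have he : 0 < Real.exp (-t ^ 2) := Real.exp_pos _
  set s := Real.sqrt (t ^ 2 + 2) with hsdef
  have hkey : (-(2 * t) * (t + s) - (1 + t / s)) + (t + s) ^ 2 = 1 - t / s := by
    field_simp
    nlinarith [hs2]
  constructor
  · unfold erfcAuxF'
    rw [← hsdef]
    rw [lt_div_iff₀ (by positivity : (0:ℝ) < (t + s) ^ 2)]
    have hpos : 0 < Real.exp (-t ^ 2) * (1 - t / s) :=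
      mul_pos he (sub_pos.2 (show t / s < 1 from (div_lt_one hs).2 hts))
    nlinarith [hkey, hpos]
  · unfold erfcAuxF'
    rw [← hsdef]
    apply div_neg_of_neg_of_pos _ (by positivity)
    have h1 : 0 < 2 * t * (t + s) := by positivity
    have h2 : 0 < 1 + t / s := by positivity
    nlinarith [mul_pos he (add_pos h1 h2)]

lemma erfcAux_tendsto : Tendsto erfcAuxF atTop (nhds 0) := by
  have hexp : Tendsto (fun t : ℝ => Real.exp (-t ^ 2)) atTop (nhds 0) := by
    apply Real.tendsto_exp_atBot.comp
    have : Tendsto (fun t : ℝ => t ^ 2) atTop atTop := tendsto_pow_atTop (by norm_num)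
    exact tendsto_neg_atBot_iff.2 this
  apply squeeze_zero' (g := fun t : ℝ => Real.exp (-t ^ 2))
  · filter_upwards with t
    exact div_nonneg (Real.exp_pos _).le (erfcAux_denom_pos t).le
  · filter_upwards [eventually_ge_atTop (1 : ℝ)] with t ht
    unfold erfcAuxF
    rw [div_le_iff₀ (erfcAux_denom_pos t)]
    have : (1 : ℝ) ≤ t + Real.sqrt (t ^ 2 + 2) := by
      have := erfcAux_sqrt_pos t
      linarith
    nlinarith [Real.exp_pos (-t ^ 2)]
  · exact hexp

theorem erfc_ratio_bound (q : ℝ) (hq : 0 < q) :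
    2 * Real.exp (-q ^ 2) / (Real.sqrt π * q * erfc q) < 1 + Real.sqrt (1 + 2 / q ^ 2) := by
  have hπ : 0 < Real.sqrt π := Real.sqrt_pos.2 Real.pi_pos
  have hintexp : IntegrableOn (fun t : ℝ => Real.exp (-t ^ 2)) (Ioi q) := by
    have := integrable_exp_neg_mul_sq (by norm_num : (0:ℝ) < 1)
    simpa using this.integrableOn
  -- integrability of the derivative
  have hscont : Continuous fun t : ℝ => Real.sqrt (t ^ 2 + 2) := by continuity
  have hF'cont : Continuous erfcAuxF' := by
    unfold erfcAuxF'
    have hnum : Continuous fun t : ℝ => Real.exp (-t ^ 2) *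
        (-(2 * t) * (t + Real.sqrt (t ^ 2 + 2)) - (1 + t / Real.sqrt (t ^ 2 + 2))) := by
      apply Continuous.mul (by continuity)
      apply Continuous.sub (by continuity)
      exact continuous_const.add (continuous_id.div hscont fun x => (erfcAux_sqrt_pos x).ne')
    exact hnum.div (by continuity) fun x => pow_ne_zero 2 (erfcAux_denom_pos x).ne'
  have hF'int : IntegrableOn erfcAuxF' (Ioi q) := by
    apply hintexp.mono' (hF'cont.aestronglyMeasurable.restrict)
    filter_upwards [ae_restrict_mem measurableSet_Ioi] with t ht
    have hk := erfcAux_key t (hq.trans ht)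
    rw [Real.norm_eq_abs, abs_le]
    constructor <;> [linarith [hk.1]; linarith [hk.2, Real.exp_pos (-t ^ 2)]]
  have hFTC : ∫ t in Ioi q, erfcAuxF' t = 0 - erfcAuxF q :=
    integral_Ioi_of_hasDerivAt_of_tendsto' (fun x _ => erfcAux_hasDerivAt x) hF'int erfcAux_tendsto
  have hsum : 0 < ∫ t in Ioi q, (Real.exp (-t ^ 2) + erfcAuxF' t) := by
    rw [setIntegral_pos_iff_support_of_nonneg_ae]
    · refine lt_of_lt_of_le ?_ (measure_mono (show Ioi q ⊆ _ from ?_))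
      · simp [hq]
      · intro t ht
        refine ⟨?_, ht⟩
        have hk := erfcAux_key t (hq.trans ht)
        simp only [Function.mem_support]
        intro hcontra
        have : -Real.exp (-t ^ 2) < erfcAuxF' t := hk.1
        nlinarith [this]
    · filter_upwards [ae_restrict_mem measurableSet_Ioi] with t ht
      have hk := erfcAux_key t (hq.trans ht)
      simp only [Pi.zero_apply]
      linarith [hk.1]
    · exact hintexp.add hF'int
  have hintsum : ∫ t in Ioi q, (Real.exp (-t ^ 2) + erfcAuxF' t)
      = (∫ t in Ioi q, Real.exp (-t ^ 2)) - erfcAuxF q := by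
    rw [integral_add hintexp hF'int, hFTC]; ring
  have hlt : erfcAuxF q < ∫ t in Ioi q, Real.exp (-t ^ 2) := by
    rw [hintsum] at hsum; linarith
  have herfc : 2 / Real.sqrt π * erfcAuxF q < erfc q := by
    unfold erfc
    apply mul_lt_mul_of_pos_left hlt (by positivity)
  set s := Real.sqrt (q ^ 2 + 2) with hsdef
  have hs : 0 < s := erfcAux_sqrt_pos q
  have hqs : 0 < q + s := erfcAux_denom_pos q
  have hFq : erfcAuxF q = Real.exp (-q ^ 2) / (q + s) := rfl
  have hFqpos : 0 < erfcAuxF q := by rw [hFq]; positivity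
  have hRHS : 1 + Real.sqrt (1 + 2 / q ^ 2) = (q + s) / q := by
    have h1 : (1 : ℝ) + 2 / q ^ 2 = (q ^ 2 + 2) / q ^ 2 := by field_simp
    rw [h1, Real.sqrt_div (by positivity), Real.sqrt_sq hq.le, hsdef]
    field_simp
  have hden : 2 * q * erfcAuxF q < Real.sqrt π * q * erfc q := by
    have := mul_lt_mul_of_pos_left herfc (mul_pos hπ hq)
    calc 2 * q * erfcAuxF q = Real.sqrt π * q * (2 / Real.sqrt π * erfcAuxF q) := by
          field_simp
      _ < Real.sqrt π * q * erfc q := by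
          apply mul_lt_mul_of_pos_left herfc (mul_pos hπ hq)
  have hbpos : 0 < 2 * q * erfcAuxF q := by positivity
  have hstep : 2 * Real.exp (-q ^ 2) / (Real.sqrt π * q * erfc q)
      < 2 * Real.exp (-q ^ 2) / (2 * q * erfcAuxF q) :=
    div_lt_div_of_pos_left (by positivity) hbpos hden
  have heq : 2 * Real.exp (-q ^ 2) / (2 * q * erfcAuxF q) = (q + s) / q := by
    rw [hFq]
    field_simp
  rw [hRHS]
  rw [heq] at hstep
  exact hstep
end

section
/- For every y > 0, one has π·erfc(y)²·e^{2y²} − 2 + 2y·√π·erfc(y)·e^{y²} > 0. -/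
open Real MeasureTheory Filter Set Topology

namespace ErfcAux

noncomputable def u (t : ℝ) : ℝ := Real.sqrt (t ^ 2 + 2)

lemma u_pos (t : ℝ) : 0 < u t := Real.sqrt_pos.2 (by positivity)

lemma u_sq (t : ℝ) : u t ^ 2 = t ^ 2 + 2 := Real.sq_sqrt (by positivity)

lemma abs_lt_u (t : ℝ) : |t| < u t := by
  have h : Real.sqrt (t ^ 2) < Real.sqrt (t ^ 2 + 2) :=
    Real.sqrt_lt_sqrt (by positivity) (by linarith)
  simpa [u, Real.sqrt_sq_eq_abs] using h

lemma den_pos (t : ℝ) : 0 < t + u t := by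
  have := abs_lt_u t
  have := neg_abs_le t
  linarith

noncomputable def g (t : ℝ) : ℝ := Real.exp (-t ^ 2) / (t + u t)

noncomputable def g' (t : ℝ) : ℝ :=
  (Real.exp (-t ^ 2) * (-2 * t) * (t + u t) - Real.exp (-t ^ 2) * (1 + t / u t)) /
    (t + u t) ^ 2

lemma hasDerivAt_g (t : ℝ) : HasDerivAt g (g' t) t := by
  have hu := u_pos t
  have hd := den_pos t
  have h1 : HasDerivAt (fun s : ℝ => -s ^ 2) (-2 * t) t := by
    simpa using ((hasDerivAt_pow 2 t).fun_neg)
  have hexp : HasDerivAt (fun s : ℝ => Real.exp (-s ^ 2))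
      (Real.exp (-t ^ 2) * (-2 * t)) t := (Real.hasDerivAt_exp _).comp t h1
  have hinner : HasDerivAt (fun s : ℝ => s ^ 2 + 2) (2 * t) t := by
    simpa using ((hasDerivAt_pow 2 t).add_const 2)
  have hsqrt : HasDerivAt u (t / u t) t := by
    have := (Real.hasDerivAt_sqrt (x := t ^ 2 + 2) (by positivity)).comp t hinner
    refine this.congr_deriv ?_
    unfold u
    field_simp
  have hden : HasDerivAt (fun s : ℝ => s + u s) (1 + t / u t) t :=
    (hasDerivAt_id t).add hsqrt
  exact hexp.div hden hd.ne'

lemma g'_nonpos {t : ℝ} (ht : 0 ≤ t) : g' t ≤ 0 := by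
  have hu := u_pos t
  have hd := den_pos t
  have htu : 0 ≤ t / u t := div_nonneg ht hu.le
  have he : 0 < Real.exp (-t ^ 2) := Real.exp_pos _
  apply div_nonpos_of_nonpos_of_nonneg _ (by positivity)
  nlinarith [mul_nonneg (mul_nonneg he.le ht) hd.le]

lemma key {t : ℝ} (ht : 0 < t) : 0 < Real.exp (-t ^ 2) + g' t := by
  have hu := u_pos t
  have hd := den_pos t
  have he : 0 < Real.exp (-t ^ 2) := Real.exp_pos _
  have husq := u_sq t
  have htu : t < u t := (le_abs_self t).trans_lt (abs_lt_u t)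
  have h : Real.exp (-t ^ 2) + g' t
      = Real.exp (-t ^ 2) * ((1 - t / u t) / (t + u t) ^ 2) := by
    unfold g'
    have hc : u t ^ 3 = (t ^ 2 + 2) * u t := by
      rw [pow_succ, u_sq]
    field_simp
    ring_nf
    nlinarith [hc]
  rw [h]
  have h1 : t / u t < 1 := (div_lt_one hu).2 htu
  exact mul_pos he (div_pos (by linarith) (by positivity))

lemma bound_abs {t : ℝ} (ht : 0 < t) : |g' t| ≤ Real.exp (-t ^ 2) := by
  rw [abs_of_nonpos (g'_nonpos ht.le)]
  linarith [key ht]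

lemma cont_g' : Continuous g' := by
  have hu : Continuous u := by
    unfold u; fun_prop
  apply Continuous.div
  · apply Continuous.sub
    · fun_prop
    · apply Continuous.mul (by fun_prop)
      exact continuous_const.add (Continuous.div continuous_id hu fun t => (u_pos t).ne')
  · fun_prop
  · intro t; exact pow_ne_zero 2 (den_pos t).ne'

lemma exp_int : Integrable (fun t : ℝ => Real.exp (-t ^ 2)) := by
  have := integrable_exp_neg_mul_sq (b := 1) one_pos
  simpa using this

lemma tendsto_g : Tendsto g atTop (𝓝 0) := by
  apply squeeze_zero' (g := fun t : ℝ => Real.exp (-t ^ 2))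
  · filter_upwards with t
    exact div_nonneg (Real.exp_pos _).le (den_pos t).le
  · filter_upwards [eventually_ge_atTop (0 : ℝ)] with t ht
    have h1 : (1 : ℝ) ≤ t + u t := by
      have : Real.sqrt 2 ≤ u t := Real.sqrt_le_sqrt (by nlinarith)
      nlinarith [Real.sq_sqrt (by norm_num : (0:ℝ) ≤ 2), Real.sqrt_nonneg 2, ht]
    calc g t ≤ Real.exp (-t ^ 2) / 1 := by
          apply div_le_div_of_nonneg_left (Real.exp_pos _).le one_pos h1 |>.trans_eq rfl
      _ = Real.exp (-t ^ 2) := by ring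
  · have h2 : Tendsto (fun t : ℝ => -t ^ 2) atTop atBot :=
      tendsto_neg_atTop_atBot.comp (tendsto_pow_atTop two_ne_zero)
    exact Real.tendsto_exp_atBot.comp h2

lemma integral_lower {y : ℝ} (hy : 0 < y) :
    Real.exp (-y ^ 2) / (y + u y) < ∫ t in Set.Ioi y, Real.exp (-t ^ 2) := by
  have hint_g' : IntegrableOn g' (Ioi y) := by
    apply Integrable.mono (exp_int.integrableOn) (cont_g'.aestronglyMeasurable.restrict)
    filter_upwards [ae_restrict_mem measurableSet_Ioi] with t ht
    rw [Real.norm_eq_abs, Real.norm_eq_abs, abs_of_pos (Real.exp_pos _)]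
    exact bound_abs (hy.trans ht)
  have hFTC : ∫ t in Ioi y, g' t = 0 - g y :=
    integral_Ioi_of_hasDerivAt_of_tendsto' (fun t _ => hasDerivAt_g t) hint_g' tendsto_g
  have hsum : ∫ t in Ioi y, (Real.exp (-t ^ 2) + g' t)
      = (∫ t in Set.Ioi y, Real.exp (-t ^ 2)) - g y := by
    rw [integral_add exp_int.integrableOn hint_g', hFTC]; ring
  have hpos : 0 < ∫ t in Ioi y, (Real.exp (-t ^ 2) + g' t) := by
    rw [setIntegral_pos_iff_support_of_nonneg_ae]
    · refine lt_of_lt_of_le ?_ (measure_mono (fun t ht => ⟨(key (hy.trans ht)).ne', ht⟩))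
      show 0 < volume (Ioi y)
      rw [Real.volume_Ioi]
      exact ENNReal.zero_lt_top
    · filter_upwards [ae_restrict_mem measurableSet_Ioi] with t ht
      exact (key (hy.trans ht)).le
    · exact exp_int.integrableOn.add hint_g'
  unfold g at hsum
  linarith [hsum ▸ hpos]

end ErfcAux

theorem erfc_quadratic_combination_pos (y : ℝ) (hy : 0 < y) :
    0 < π * erfc y ^ 2 * Real.exp (2 * y ^ 2) - 2 +
      2 * y * Real.sqrt π * erfc y * Real.exp (y ^ 2) := by
  have hπ : 0 < Real.sqrt π := Real.sqrt_pos.2 pi_pos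
  set v := ErfcAux.u y with hv
  set I := ∫ t in Set.Ioi y, Real.exp (-t ^ 2) with hIdef
  have hI : Real.exp (-y ^ 2) / (y + v) < I := ErfcAux.integral_lower hy
  have hu : 0 < v := ErfcAux.u_pos y
  have hd : 0 < y + v := ErfcAux.den_pos y
  have husq : v ^ 2 = y ^ 2 + 2 := ErfcAux.u_sq y
  have hE : (0:ℝ) < Real.exp (y ^ 2) := Real.exp_pos _
  have hIpos : 0 < I := lt_trans (by positivity) hI
  set J := I * Real.exp (y ^ 2) with hJdef
  have hJpos : 0 < J := mul_pos hIpos hE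
  have hJ : 1 < J * (y + v) := by
    have h1 : Real.exp (-y ^ 2) < I * (y + v) := (div_lt_iff₀ hd).1 hI
    have hee : Real.exp (-y ^ 2) * Real.exp (y ^ 2) = 1 := by
      rw [← Real.exp_add]; simp
    calc (1:ℝ) = Real.exp (-y ^ 2) * Real.exp (y ^ 2) := hee.symm
      _ < (I * (y + v)) * Real.exp (y ^ 2) := by
          exact mul_lt_mul_of_pos_right h1 hE
      _ = J * (y + v) := by rw [hJdef]; ring
  have key : 0 < 4 * J ^ 2 - 2 + 4 * y * J := by
    have h1 : 0 < 2 * J - (v - y) := by nlinarith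
    nlinarith [mul_pos h1 (show 0 < 2 * J + v + y by linarith)]
  have herfc : erfc y = (2 / Real.sqrt π) * I := rfl
  have hexp2 : Real.exp (2 * y ^ 2) = Real.exp (y ^ 2) * Real.exp (y ^ 2) := by
    rw [← Real.exp_add]; ring_nf
  have heq : π * ((2 / Real.sqrt π) * I) ^ 2 * (Real.exp (y ^ 2) * Real.exp (y ^ 2)) - 2 +
      2 * y * Real.sqrt π * ((2 / Real.sqrt π) * I) * Real.exp (y ^ 2)
      = 4 * J ^ 2 - 2 + 4 * y * J := by
    have hsq : Real.sqrt π * Real.sqrt π = π := Real.mul_self_sqrt pi_pos.le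
    rw [hJdef]
    field_simp
    nlinarith [hsq]
  rw [herfc, hexp2, heq]
  exact key
end

section
/- Fix real numbers a and b with a ≥ b > 0. Then the function f(y) = a·y² + b·log(erfc(y)) is strictly convex on (0, ∞); that is, f''(y) > 0 for all y > 0. -/
open Real MeasureTheory Filter Set
open Topology

private lemma hasDerivAt_sq (z : ℝ) : HasDerivAt (fun x : ℝ => x ^ 2) (2 * z) z := by
  simpa using hasDerivAt_pow 2 z

private lemma hJder (y : ℝ) :
    HasDerivAt (fun u => ∫ t in (0:ℝ)..u, Real.exp (-t ^ 2)) (Real.exp (-y ^ 2)) y :=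
  ((Real.continuous_exp.comp (continuous_pow 2).neg).integral_hasStrictDerivAt 0 y).hasDerivAt

private lemma hint : IntegrableOn (fun t : ℝ => Real.exp (-t ^ 2)) (Set.Ioi 0) := by
  simpa using (integrable_exp_neg_mul_sq one_pos).integrableOn

private lemma hgauss : (∫ t in Set.Ioi (0:ℝ), Real.exp (-t ^ 2)) = Real.sqrt π / 2 := by
  simpa using integral_gaussian_Ioi 1

private lemma hIJ (y : ℝ) (hy : 0 ≤ y) :
    (∫ t in Set.Ioi y, Real.exp (-t ^ 2))
      = Real.sqrt π / 2 - ∫ t in (0:ℝ)..y, Real.exp (-t ^ 2) := by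
  have h1 : (∫ t in Set.Ioc (0:ℝ) y, Real.exp (-t ^ 2))
      + (∫ t in Set.Ioi y, Real.exp (-t ^ 2)) = ∫ t in Set.Ioi (0:ℝ), Real.exp (-t ^ 2) := by
    rw [← setIntegral_union (Set.Ioc_disjoint_Ioi le_rfl) measurableSet_Ioi
      (hint.mono_set Set.Ioc_subset_Ioi_self) (hint.mono_set (Set.Ioi_subset_Ioi hy)),
      Set.Ioc_union_Ioi_eq_Ioi hy]
  rw [intervalIntegral.integral_of_le hy]
  rw [hgauss] at h1
  linarith

private lemma hexp (z : ℝ) :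
    HasDerivAt (fun x : ℝ => Real.exp (-x ^ 2)) (-2 * z * Real.exp (-z ^ 2)) z := by
  have := (Real.hasDerivAt_exp (-z ^ 2)).comp z (hasDerivAt_sq z).neg
  refine this.congr_deriv ?_
  ring

private lemma hsqrt (z : ℝ) :
    HasDerivAt (fun x : ℝ => Real.sqrt (x ^ 2 + 2)) (z / Real.sqrt (z ^ 2 + 2)) z := by
  have := (Real.hasDerivAt_sqrt (show z ^ 2 + 2 ≠ 0 by positivity)).comp z
    ((hasDerivAt_sq z).add_const 2)
  refine this.congr_deriv ?_
  have h : Real.sqrt (z ^ 2 + 2) ≠ 0 := by positivity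
  field_simp

private lemma hpsi (z : ℝ) :
    HasDerivAt (fun x : ℝ => Real.exp (-x ^ 2) * (Real.sqrt (x ^ 2 + 2) - x) / 2)
      ((-2 * z * Real.exp (-z ^ 2)) * (Real.sqrt (z ^ 2 + 2) - z) / 2
        + Real.exp (-z ^ 2) * (z / Real.sqrt (z ^ 2 + 2) - 1) / 2) z := by
  have := ((hexp z).mul ((hsqrt z).sub (hasDerivAt_id z))).div_const 2
  refine this.congr_deriv ?_
  simp only [Pi.sub_apply, id_eq]
  ring

private lemma hDneg (z : ℝ) (hz : 0 < z) :
    -Real.exp (-z ^ 2) - ((-2 * z * Real.exp (-z ^ 2)) * (Real.sqrt (z ^ 2 + 2) - z) / 2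
        + Real.exp (-z ^ 2) * (z / Real.sqrt (z ^ 2 + 2) - 1) / 2) < 0 := by
  set s := Real.sqrt (z ^ 2 + 2) with hs
  have hs2 : s ^ 2 = z ^ 2 + 2 := Real.sq_sqrt (by positivity)
  have hs0 : 0 < s := Real.sqrt_pos.2 (by positivity)
  have hE : 0 < Real.exp (-z ^ 2) := Real.exp_pos _
  have key : 2 * z ^ 3 + 3 * z < s * (2 * z ^ 2 + 1) := by
    have hBsq : (s * (2 * z ^ 2 + 1)) ^ 2 = (2 * z ^ 3 + 3 * z) ^ 2 + 2 := by
      rw [mul_pow, hs2]; ring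
    nlinarith [hBsq, hs0, mul_pos hs0 (show (0:ℝ) < 2 * z ^ 2 + 1 by positivity),
      mul_pos hz (show (0:ℝ) < 2 * z ^ 2 + 3 by positivity)]
  have hDeq : -Real.exp (-z ^ 2) - ((-2 * z * Real.exp (-z ^ 2)) * (s - z) / 2
        + Real.exp (-z ^ 2) * (z / s - 1) / 2)
      = Real.exp (-z ^ 2) * (2 * z ^ 3 + 3 * z - s * (2 * z ^ 2 + 1)) / (2 * s) := by
    field_simp
    linear_combination (2 * z) * hs2
  rw [hDeq]
  exact div_neg_of_neg_of_pos (mul_neg_of_pos_of_neg hE (by linarith)) (by linarith)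

private lemma komatsu (y : ℝ) (hy : 0 < y) :
    Real.exp (-y ^ 2) * (Real.sqrt (y ^ 2 + 2) - y) / 2
      < ∫ t in Set.Ioi y, Real.exp (-t ^ 2) := by
  set ψ : ℝ → ℝ := fun z => Real.exp (-z ^ 2) * (Real.sqrt (z ^ 2 + 2) - z) / 2 with hψdef
  set h : ℝ → ℝ :=
    fun z => (Real.sqrt π / 2 - ∫ t in (0:ℝ)..z, Real.exp (-t ^ 2)) - ψ z with hhdef
  have hhd : ∀ z : ℝ, HasDerivAt h
      (-Real.exp (-z ^ 2) - ((-2 * z * Real.exp (-z ^ 2)) * (Real.sqrt (z ^ 2 + 2) - z) / 2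
        + Real.exp (-z ^ 2) * (z / Real.sqrt (z ^ 2 + 2) - 1) / 2)) z := by
    intro z
    have := ((hasDerivAt_const z (Real.sqrt π / 2)).sub (hJder z)).sub (hpsi z)
    refine this.congr_deriv ?_
    ring
  have hcont : Continuous h := by
    have hdiff : Differentiable ℝ h := fun z => (hhd z).differentiableAt
    exact hdiff.continuous
  have hanti : StrictAntiOn h (Set.Ici y) := by
    apply strictAntiOn_of_deriv_neg (convex_Ici y) hcont.continuousOn
    intro z hz
    rw [interior_Ici] at hz
    rw [(hhd z).deriv]
    exact hDneg z (hy.trans hz)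
  have hJt : Tendsto (fun z => ∫ t in (0:ℝ)..z, Real.exp (-t ^ 2)) atTop
      (𝓝 (Real.sqrt π / 2)) := by
    have := MeasureTheory.intervalIntegral_tendsto_integral_Ioi 0 hint tendsto_id
    rwa [hgauss] at this
  have hψt : Tendsto ψ atTop (𝓝 0) := by
    have hb : Tendsto (fun z : ℝ => Real.exp (-z ^ 2) * Real.sqrt 2 / 2) atTop (𝓝 0) := by
      have h1 : Tendsto (fun z : ℝ => -z ^ 2) atTop atBot :=
        tendsto_neg_atTop_atBot.comp (tendsto_pow_atTop two_ne_zero)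
      have h2 := Real.tendsto_exp_atBot.comp h1
      have h3 := (h2.mul_const (Real.sqrt 2)).div_const 2
      simpa using h3
    apply squeeze_zero' ?_ ?_ hb
    · filter_upwards [eventually_ge_atTop (0:ℝ)] with z hz
      have hzs : z ≤ Real.sqrt (z ^ 2 + 2) := by
        have h4 := Real.sqrt_le_sqrt (show z ^ 2 ≤ z ^ 2 + 2 by linarith)
        rwa [Real.sqrt_sq hz] at h4
      simp only [hψdef]
      exact div_nonneg (mul_nonneg (Real.exp_pos _).le (by linarith)) (by norm_num)
    · filter_upwards [eventually_ge_atTop (0:ℝ)] with z hz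
      have hsle : Real.sqrt (z ^ 2 + 2) ≤ z + Real.sqrt 2 := by
        have h4 : z ^ 2 + 2 ≤ (z + Real.sqrt 2) ^ 2 := by
          nlinarith [Real.sq_sqrt (show (0:ℝ) ≤ 2 by norm_num), Real.sqrt_nonneg 2, hz]
        have h5 := Real.sqrt_le_sqrt h4
        rwa [Real.sqrt_sq (by positivity : (0:ℝ) ≤ z + Real.sqrt 2)] at h5
      simp only [hψdef]
      have hmul := mul_le_mul_of_nonneg_left
        (show Real.sqrt (z ^ 2 + 2) - z ≤ Real.sqrt 2 by linarith) (Real.exp_pos (-z ^ 2)).le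
      linarith
  have hht : Tendsto h atTop (𝓝 0) := by
    have hthis := ((tendsto_const_nhds (x := Real.sqrt π / 2)).sub hJt).sub hψt
    simpa using hthis
  have h1 : 0 ≤ h (y + 1) := by
    apply le_of_tendsto hht
    filter_upwards [eventually_ge_atTop (y + 1)] with z hz
    rcases eq_or_lt_of_le hz with hzz | hzz
    · exact le_of_eq (congrArg h hzz.symm)
    · exact (hanti (by simp only [Set.mem_Ici]; linarith) (by simp only [Set.mem_Ici]; linarith) hzz).le
  have h2 : h (y + 1) < h y :=
    hanti (Set.self_mem_Ici) (by simp only [Set.mem_Ici]; linarith) (lt_add_one y)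
  have h3 : 0 < h y := lt_of_le_of_lt h1 h2
  rw [hIJ y hy.le]
  simp only [hhdef, hψdef] at h3
  linarith

theorem strictConvex_quadratic_add_log_erfc (a b : ℝ) (hab : b ≤ a) (hb : 0 < b) :
    StrictConvexOn ℝ (Set.Ioi (0 : ℝ))
        (fun y => a * y ^ 2 + b * Real.log (erfc y)) ∧
    ∀ y : ℝ, 0 < y →
      0 < deriv (deriv (fun y => a * y ^ 2 + b * Real.log (erfc y))) y := by
  have hπ : 0 < Real.sqrt π := Real.sqrt_pos.2 Real.pi_pos
  set c : ℝ := 2 / Real.sqrt π with hc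
  have hc0 : 0 < c := by positivity
  set E : ℝ → ℝ := fun y => c * (Real.sqrt π / 2 - ∫ t in (0:ℝ)..y, Real.exp (-t ^ 2)) with hEdef
  have herfcE : ∀ y : ℝ, 0 ≤ y → erfc y = E y := by
    intro y hy
    unfold erfc
    rw [hIJ y hy]
  have hEd : ∀ y : ℝ, HasDerivAt E (-(c * Real.exp (-y ^ 2))) y := by
    intro y
    have h0 := ((hasDerivAt_const y (Real.sqrt π / 2)).sub (hJder y)).const_mul c
    refine h0.congr_deriv ?_
    ring
  have hψpos : ∀ y : ℝ, 0 < y → 0 < Real.exp (-y ^ 2) * (Real.sqrt (y ^ 2 + 2) - y) / 2 := by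
    intro y hy
    have hky : y < Real.sqrt (y ^ 2 + 2) := by
      have h4 := Real.sqrt_lt_sqrt (sq_nonneg y) (show y ^ 2 < y ^ 2 + 2 by linarith)
      rwa [Real.sqrt_sq hy.le] at h4
    have h5 : 0 < Real.sqrt (y ^ 2 + 2) - y := by linarith
    have h6 := Real.exp_pos (-y ^ 2)
    positivity
  have hEgt : ∀ y : ℝ, 0 < y →
      c * (Real.exp (-y ^ 2) * (Real.sqrt (y ^ 2 + 2) - y) / 2) < E y := by
    intro y hy
    have h1 := komatsu y hy
    rw [hIJ y hy.le] at h1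
    simp only [hEdef]
    exact (mul_lt_mul_iff_right₀ hc0).2 h1
  have hEpos : ∀ y : ℝ, 0 < y → 0 < E y := fun y hy =>
    (mul_pos hc0 (hψpos y hy)).trans (hEgt y hy)
  set f : ℝ → ℝ := fun y => a * y ^ 2 + b * Real.log (erfc y) with hfdef
  set F1 : ℝ → ℝ := fun y => 2 * a * y + b * (-(c * Real.exp (-y ^ 2)) / E y) with hF1def
  have hfd : ∀ y : ℝ, 0 < y → HasDerivAt f (F1 y) y := by
    intro y hy
    have hlog : HasDerivAt (fun x => Real.log (E x)) (-(c * Real.exp (-y ^ 2)) / E y) y :=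
      (hEd y).log (hEpos y hy).ne'
    have h1 : HasDerivAt (fun x => a * x ^ 2 + b * Real.log (E x)) (F1 y) y := by
      have h2 := ((hasDerivAt_sq y).const_mul a).add (hlog.const_mul b)
      refine h2.congr_deriv ?_
      simp only [hF1def]
      ring
    apply h1.congr_of_eventuallyEq
    filter_upwards [isOpen_Ioi.mem_nhds hy] with z hz
    simp only [hfdef]
    rw [herfcE z (le_of_lt hz)]
  have hd1 : ∀ y : ℝ, 0 < y → deriv f y = F1 y := fun y hy => (hfd y hy).deriv
  set D2 : ℝ → ℝ := fun y => 2 * a + b * ((2 * c * y * Real.exp (-y ^ 2) * E y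
      - -(c * Real.exp (-y ^ 2)) * -(c * Real.exp (-y ^ 2))) / E y ^ 2) with hD2def
  have hF1d : ∀ y : ℝ, 0 < y → HasDerivAt F1 (D2 y) y := by
    intro y hy
    have hu : HasDerivAt (fun x : ℝ => -(c * Real.exp (-x ^ 2)))
        (2 * c * y * Real.exp (-y ^ 2)) y := by
      have h3 := ((hexp y).const_mul c).neg
      refine h3.congr_deriv ?_
      ring
    have hdiv := hu.div (hEd y) (hEpos y hy).ne'
    have h4 := ((hasDerivAt_id y).const_mul (2 * a)).add (hdiv.const_mul b)
    refine h4.congr_deriv ?_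
    simp only [hD2def]
    ring
  have hd2 : ∀ y : ℝ, 0 < y → deriv (deriv f) y = D2 y := by
    intro y hy
    have hev : deriv f =ᶠ[𝓝 y] F1 := by
      filter_upwards [isOpen_Ioi.mem_nhds hy] with z hz using hd1 z hz
    rw [hev.deriv_eq]
    exact (hF1d y hy).deriv
  have hpos : ∀ y : ℝ, 0 < y → 0 < D2 y := by
    intro y hy
    have hEy := hEpos y hy
    have he : 0 < Real.exp (-y ^ 2) := Real.exp_pos _
    set e := Real.exp (-y ^ 2) with hedef
    set s := Real.sqrt (y ^ 2 + 2) with hsdef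
    have hs2 : s ^ 2 = y ^ 2 + 2 := Real.sq_sqrt (by positivity)
    set r := c * (e * (s - y) / 2) with hrdef
    have hr0 : 0 < r := mul_pos hc0 (hψpos y hy)
    have hrE : r < E y := hEgt y hy
    have hid : 2 * r ^ 2 + 2 * y * (c * e) * r - (c * e) ^ 2 = 0 := by
      simp only [hrdef]
      linear_combination (c ^ 2 * e ^ 2 / 2) * hs2
    have hkey : 0 < 2 * E y ^ 2 + 2 * y * (c * e) * E y - (c * e) ^ 2 := by
      nlinarith [hid, mul_pos (sub_pos.2 hrE) (show (0:ℝ) < E y + r by linarith),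
        mul_pos (mul_pos hy (mul_pos hc0 he)) (sub_pos.2 hrE)]
    have h2 : 0 < 2 * b + b * ((2 * c * y * e * E y - (c * e) ^ 2) / E y ^ 2) := by
      have heq : 2 * b + b * ((2 * c * y * e * E y - (c * e) ^ 2) / E y ^ 2)
          = b * (2 * E y ^ 2 + 2 * y * (c * e) * E y - (c * e) ^ 2) / E y ^ 2 := by
        field_simp
        ring
      rw [heq]
      exact div_pos (mul_pos hb hkey) (pow_pos hEy 2)
    have heq2 : D2 y = 2 * a + b * ((2 * c * y * e * E y - (c * e) ^ 2) / E y ^ 2) := by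
      simp only [hD2def]
      ring
    rw [heq2]
    linarith
  have hcont : ContinuousOn f (Set.Ioi 0) := by
    apply ContinuousOn.add ((continuous_const.mul (continuous_pow 2)).continuousOn)
    apply ContinuousOn.mul continuousOn_const
    have hEc : ContinuousOn E (Set.Ioi 0) :=
      (Differentiable.continuous (fun y => (hEd y).differentiableAt)).continuousOn
    have hlogE : ContinuousOn (fun y => Real.log (E y)) (Set.Ioi 0) :=
      ContinuousOn.log hEc (fun y hy => (hEpos y hy).ne')
    exact hlogE.congr (fun y hy => by rw [herfcE y (le_of_lt (Set.mem_Ioi.1 hy))])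
  constructor
  · apply strictConvexOn_of_deriv2_pos (convex_Ioi 0) hcont
    intro x hx
    rw [interior_Ioi] at hx
    have hit : deriv^[2] f x = deriv (deriv f) x := rfl
    rw [hit, hd2 x hx]
    exact hpos x hx
  · intro y hy
    rw [hd2 y hy]
    exact hpos y hy
end

section
/- Fix η ∈ (0,1) and β ∈ (0,1). Define ψ(α) = (1−β)·√(2/π)·exp(−(erfinv((1−α)/(1−β)))²) / ((α−ηβ)·√2·erfinv((1−α)/(1−β))) for α ∈ (β, 1). Then ψ is strictly increasing on (β, 1). -/
open Real MeasureTheory Filter Set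

namespace PsiAux

lemma gauss_cont : Continuous fun t : ℝ => Real.exp (-t ^ 2) := by
  continuity

lemma gauss_eq : (fun t : ℝ => Real.exp (-t ^ 2)) = fun t : ℝ => Real.exp (-1 * t ^ 2) := by
  funext t; ring_nf

lemma gauss_integrable : Integrable (fun t : ℝ => Real.exp (-t ^ 2)) := by
  rw [gauss_eq]; exact integrable_exp_neg_mul_sq one_pos

lemma gauss_integral_Ioi_zero : ∫ t in Set.Ioi (0:ℝ), Real.exp (-t ^ 2) = Real.sqrt π / 2 := by
  rw [gauss_eq]
  simpa using integral_gaussian_Ioi 1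

lemma sqrt_pi_pos : 0 < Real.sqrt π := Real.sqrt_pos.2 Real.pi_pos

lemma erf_hasDerivAt (y : ℝ) :
    HasDerivAt erf ((2 / Real.sqrt π) * Real.exp (-y ^ 2)) y := by
  have h := intervalIntegral.integral_hasDerivAt_right
    (gauss_integrable.intervalIntegrable (a := 0) (b := y))
    (gauss_cont.stronglyMeasurableAtFilter _ _) gauss_cont.continuousAt
  exact h.const_mul _

lemma erf_strictMono : StrictMono erf := by
  have : ∀ y : ℝ, 0 < deriv erf y := by
    intro y
    rw [(erf_hasDerivAt y).deriv]
    positivity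
  exact strictMono_of_deriv_pos this

lemma erf_continuous : Continuous erf :=
  continuous_iff_continuousAt.2 fun y => (erf_hasDerivAt y).continuousAt

lemma erf_zero : erf 0 = 0 := by
  simp [erf]

lemma intervalIntegral_tendsto :
    Tendsto (fun q : ℝ => ∫ t in (0:ℝ)..q, Real.exp (-t ^ 2)) atTop
      (nhds (Real.sqrt π / 2)) := by
  rw [← gauss_integral_Ioi_zero]
  exact intervalIntegral_tendsto_integral_Ioi 0 gauss_integrable.integrableOn tendsto_id

lemma erf_tendsto_one : Tendsto erf atTop (nhds 1) := by
  have h := (intervalIntegral_tendsto).const_mul (2 / Real.sqrt π)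
  have : (2 / Real.sqrt π) * (Real.sqrt π / 2) = 1 := by
    field_simp
  rwa [this] at h

lemma integral_split (y : ℝ) (hy : 0 ≤ y) :
    (∫ t in (0:ℝ)..y, Real.exp (-t ^ 2)) + ∫ t in Set.Ioi y, Real.exp (-t ^ 2)
      = Real.sqrt π / 2 := by
  rw [← gauss_integral_Ioi_zero, intervalIntegral.integral_of_le hy,
    ← Set.Ioc_union_Ioi_eq_Ioi hy,
    MeasureTheory.setIntegral_union (Set.Ioc_disjoint_Ioi le_rfl) measurableSet_Ioi
      (gauss_integrable.integrableOn) (gauss_integrable.integrableOn)]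

lemma erf_add_erfc (y : ℝ) (hy : 0 ≤ y) : erf y + erfc y = 1 := by
  rw [erf, erfc, ← mul_add, integral_split y hy]
  field_simp

lemma I_hasDerivAt (q : ℝ) :
    HasDerivAt (fun u : ℝ => ∫ t in (0:ℝ)..u, Real.exp (-t ^ 2)) (Real.exp (-q ^ 2)) q :=
  intervalIntegral.integral_hasDerivAt_right
    (gauss_integrable.intervalIntegrable)
    (gauss_cont.stronglyMeasurableAtFilter _ _) gauss_cont.continuousAt

noncomputable def H (q : ℝ) : ℝ :=
  (Real.sqrt π / 2 - ∫ t in (0:ℝ)..q, Real.exp (-t ^ 2))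
    - Real.exp (-q ^ 2) / (q + Real.sqrt (q ^ 2 + 2))

lemma s_pos (q : ℝ) : 0 < Real.sqrt (q ^ 2 + 2) := Real.sqrt_pos.2 (by positivity)

lemma v_pos (q : ℝ) : 0 < q + Real.sqrt (q ^ 2 + 2) := by
  have h1 : |q| < Real.sqrt (q ^ 2 + 2) := by
    rw [← Real.sqrt_sq_eq_abs]
    exact Real.sqrt_lt_sqrt (by positivity) (by linarith)
  have := neg_abs_le q
  linarith

lemma H_hasDerivAt (q : ℝ) :
    HasDerivAt H
      ((0 - Real.exp (-q ^ 2)) -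
        ((Real.exp (-q ^ 2) * -(2 * q) * (q + Real.sqrt (q ^ 2 + 2)) -
            Real.exp (-q ^ 2) * (1 + 1 / (2 * Real.sqrt (q ^ 2 + 2)) * (2 * q))) /
          (q + Real.sqrt (q ^ 2 + 2)) ^ 2)) q := by
  have hsq : HasDerivAt (fun u : ℝ => u ^ 2) (2 * q) q := by
    simpa using hasDerivAt_pow 2 q
  have hneg : HasDerivAt (fun u : ℝ => -u ^ 2) (-(2 * q)) q := hsq.neg
  have hu : HasDerivAt (fun u : ℝ => Real.exp (-u ^ 2))
      (Real.exp (-q ^ 2) * -(2 * q)) q := hneg.exp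
  have hs : HasDerivAt (fun u : ℝ => Real.sqrt (u ^ 2 + 2))
      (1 / (2 * Real.sqrt (q ^ 2 + 2)) * (2 * q)) q := by
    have h2 : HasDerivAt (fun u : ℝ => u ^ 2 + 2) (2 * q) q := hsq.add_const 2
    exact (Real.hasDerivAt_sqrt (by positivity)).comp q h2
  have hv : HasDerivAt (fun u : ℝ => u + Real.sqrt (u ^ 2 + 2))
      (1 + 1 / (2 * Real.sqrt (q ^ 2 + 2)) * (2 * q)) q := (hasDerivAt_id q).add hs
  have hdiv := hu.div hv (ne_of_gt (v_pos q))
  exact ((hasDerivAt_const q (Real.sqrt π / 2)).sub (I_hasDerivAt q)).sub hdiv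

lemma H_deriv_neg {q : ℝ} (hq : 0 < q) : deriv H q < 0 := by
  rw [(H_hasDerivAt q).deriv]
  set s := Real.sqrt (q ^ 2 + 2) with hs
  set e := Real.exp (-q ^ 2) with he
  have hspos : 0 < s := s_pos q
  have hsq : s ^ 2 = q ^ 2 + 2 := Real.sq_sqrt (by positivity)
  have hvpos : 0 < q + s := v_pos q
  have hepos : 0 < e := Real.exp_pos _
  have hqs : q < s := by nlinarith
  have hfrac : 1 / (2 * s) * (2 * q) = q / s := by field_simp
  rw [hfrac]
  have hdivlt : q / s < 1 := (div_lt_one hspos).2 hqs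
  have key : -e * (q + s) ^ 2 < e * -(2 * q) * (q + s) - e * (1 + q / s) := by
    nlinarith [mul_pos hepos (sub_pos.2 hdivlt)]
  have h2 : -e < (e * -(2 * q) * (q + s) - e * (1 + q / s)) / (q + s) ^ 2 :=
    (lt_div_iff₀ (by positivity)).2 (by linarith)
  linarith

lemma H_tendsto : Tendsto H atTop (nhds 0) := by
  have h1 : Tendsto (fun q : ℝ => Real.sqrt π / 2 - ∫ t in (0:ℝ)..q, Real.exp (-t ^ 2))
      atTop (nhds 0) := by
    have := tendsto_const_nhds (x := Real.sqrt π / 2) (f := atTop (α := ℝ)) |>.sub intervalIntegral_tendsto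
    simpa using this
  have h2 : Tendsto (fun q : ℝ => Real.exp (-q ^ 2) / (q + Real.sqrt (q ^ 2 + 2)))
      atTop (nhds 0) := by
    have ha : Tendsto (fun q : ℝ => Real.exp (-q ^ 2)) atTop (nhds 0) := by
      apply Real.tendsto_exp_atBot.comp
      have : Tendsto (fun q : ℝ => q ^ 2) atTop atTop := tendsto_pow_atTop two_ne_zero
      exact tendsto_neg_atBot_iff.2 this
    have hb : Tendsto (fun q : ℝ => q + Real.sqrt (q ^ 2 + 2)) atTop atTop := by
      apply tendsto_atTop_mono (fun q => ?_) tendsto_id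
      simp only [id]
      nlinarith [Real.sqrt_nonneg (q ^ 2 + 2)]
    simpa using ha.div_atTop hb
  have := h1.sub h2
  rw [sub_zero] at this
  exact this

lemma H_pos {q : ℝ} (hq : 0 < q) : 0 < H q := by
  have hanti : StrictAntiOn H (Set.Ici 0) := by
    apply strictAntiOn_of_deriv_neg (convex_Ici 0)
    · exact fun x _ => (H_hasDerivAt x).continuousAt.continuousWithinAt
    · intro x hx
      rw [interior_Ici] at hx
      exact H_deriv_neg hx
  have h1 : 0 ≤ H (q + 1) := by
    apply le_of_tendsto H_tendsto
    filter_upwards [eventually_ge_atTop (q + 1)] with t ht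
    rcases eq_or_lt_of_le ht with h | h
    · exact le_of_eq (by rw [h])
    · exact le_of_lt (hanti (Set.mem_Ici.2 (by positivity)) (Set.mem_Ici.2 (by nlinarith)) h)
  have h2 : H (q + 1) < H q := hanti (Set.mem_Ici.2 hq.le) (Set.mem_Ici.2 (by positivity)) (by linarith)
  linarith

lemma erfc_lower {q : ℝ} (hq : 0 < q) :
    (2 / Real.sqrt π) * Real.exp (-q ^ 2) / (q + Real.sqrt (q ^ 2 + 2)) < erfc q := by
  have hH := H_pos hq
  have hsplit := integral_split q hq.le
  have : Real.exp (-q ^ 2) / (q + Real.sqrt (q ^ 2 + 2))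
      < ∫ t in Set.Ioi q, Real.exp (-t ^ 2) := by
    unfold H at hH; linarith
  rw [erfc, mul_div_assoc]
  have hc : (0:ℝ) < 2 / Real.sqrt π := by positivity
  exact (mul_lt_mul_iff_right₀ hc).2 this


lemma erfinv_spec {x : ℝ} (hx : x ∈ Set.Ioo (0:ℝ) 1) : erf (erfinv x) = x := by
  obtain ⟨hx0, hx1⟩ := hx
  have hQ : ∃ Q : ℝ, x < erf Q := by
    have := (erf_tendsto_one.eventually (eventually_gt_nhds hx1)).exists
    exact this.imp fun Q hQ => hQ
  obtain ⟨Q, hQ⟩ := hQ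
  have h0Q : (0:ℝ) ≤ Q := by
    by_contra h
    push_neg at h
    have := erf_strictMono h
    rw [erf_zero] at this
    nlinarith [hQ]
  have hsurj : ∃ q ∈ Set.Icc (0:ℝ) Q, erf q = x := by
    have := intermediate_value_Icc h0Q (erf_continuous.continuousOn (s := Set.Icc 0 Q))
    have hmem : x ∈ Set.Icc (erf 0) (erf Q) := by
      rw [erf_zero]; exact ⟨hx0.le, hQ.le⟩
    exact this hmem |>.imp fun q hq => ⟨hq.1, hq.2⟩
  obtain ⟨q, _, hq⟩ := hsurj
  exact Function.invFun_eq ⟨q, hq⟩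

lemma erfinv_pos {x : ℝ} (hx : x ∈ Set.Ioo (0:ℝ) 1) : 0 < erfinv x := by
  have h := erfinv_spec hx
  by_contra hle
  push_neg at hle
  have := erf_strictMono.monotone hle
  rw [h, erf_zero] at this
  exact absurd this (not_le.2 hx.1)

lemma F_hasDerivAt (a b q : ℝ) :
    HasDerivAt (fun q : ℝ => (a - b * erf q) * (q * Real.exp (q ^ 2)))
      (-(b * ((2 / Real.sqrt π) * Real.exp (-q ^ 2))) * (q * Real.exp (q ^ 2)) +
        (a - b * erf q) * (1 * Real.exp (q ^ 2) + q * (Real.exp (q ^ 2) * (2 * q)))) q := by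
  have h1 : HasDerivAt (fun q : ℝ => a - b * erf q)
      (-(b * ((2 / Real.sqrt π) * Real.exp (-q ^ 2)))) q :=
    ((erf_hasDerivAt q).const_mul b).const_sub a
  have hsq : HasDerivAt (fun u : ℝ => u ^ 2) (2 * q) q := by
    simpa using hasDerivAt_pow 2 q
  have h2 : HasDerivAt (fun q : ℝ => q * Real.exp (q ^ 2))
      (1 * Real.exp (q ^ 2) + q * (Real.exp (q ^ 2) * (2 * q))) q :=
    (hasDerivAt_id q).mul hsq.exp
  exact h1.mul h2

lemma F_deriv_pos {a b q : ℝ} (hb : 0 < b) (hab : b < a) (hq : 0 < q) :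
    0 < deriv (fun q : ℝ => (a - b * erf q) * (q * Real.exp (q ^ 2))) q := by
  rw [(F_hasDerivAt a b q).deriv]
  set s := Real.sqrt (q ^ 2 + 2) with hs
  set e1 := Real.exp (-q ^ 2) with he1
  set e2 := Real.exp (q ^ 2) with he2
  set c := 2 / Real.sqrt π with hc
  have hspos : 0 < s := s_pos q
  have hsq : s ^ 2 = q ^ 2 + 2 := Real.sq_sqrt (by positivity)
  have hvpos : 0 < q + s := v_pos q
  have he1pos : 0 < e1 := Real.exp_pos _
  have he2pos : 0 < e2 := Real.exp_pos _
  have hcpos : 0 < c := by rw [hc]; positivity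
  have key0 : c * e1 / (q + s) < erfc q := erfc_lower hq
  have herfcpos : 0 < erfc q := lt_trans (by positivity) key0
  have key0' : c * e1 < erfc q * (q + s) := by
    rw [div_lt_iff₀ hvpos] at key0; linarith
  have h3 : q * (q + s) ≤ 1 + 2 * q ^ 2 := by nlinarith [sq_nonneg (q - s)]
  have h4 : c * e1 * q < erfc q * (1 + 2 * q ^ 2) := by
    nlinarith [mul_lt_mul_of_pos_right key0' hq, mul_le_mul_of_nonneg_left h3 herfcpos.le]
  have herfc_eq : erfc q = 1 - erf q := by
    have := erf_add_erfc q hq.le; linarith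
  have h5 : b * erfc q < a - b * erf q := by
    rw [herfc_eq]; nlinarith
  have h6 : b * (c * e1 * q) < (a - b * erf q) * (1 + 2 * q ^ 2) := by
    calc b * (c * e1 * q) < b * (erfc q * (1 + 2 * q ^ 2)) :=
          mul_lt_mul_of_pos_left h4 hb
      _ = b * erfc q * (1 + 2 * q ^ 2) := by ring
      _ < (a - b * erf q) * (1 + 2 * q ^ 2) :=
          mul_lt_mul_of_pos_right h5 (by positivity)
  have h8 : 0 < e2 * ((a - b * erf q) * (1 + 2 * q ^ 2) - b * (c * e1 * q)) :=
    mul_pos he2pos (by linarith)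
  nlinarith [h8]

lemma F_strictMono {a b : ℝ} (hb : 0 < b) (hab : b < a) :
    StrictMonoOn (fun q : ℝ => (a - b * erf q) * (q * Real.exp (q ^ 2))) (Set.Ici 0) := by
  apply strictMonoOn_of_deriv_pos (convex_Ici 0)
  · exact ((continuous_const.sub (continuous_const.mul erf_continuous)).mul
      (continuous_id.mul (Real.continuous_exp.comp (continuous_pow 2)))).continuousOn
  · intro x hx
    rw [interior_Ici] at hx
    exact F_deriv_pos hb hab hx

end PsiAux

theorem psi_strictMono (η β : ℝ) (hη : η ∈ Set.Ioo (0:ℝ) 1) (hβ : β ∈ Set.Ioo (0:ℝ) 1) :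
    StrictMonoOn
      (fun α => (1 - β) * Real.sqrt (2 / π) *
          Real.exp (-(erfinv ((1 - α) / (1 - β))) ^ 2) /
        ((α - η * β) * Real.sqrt 2 * erfinv ((1 - α) / (1 - β))))
      (Set.Ioo β 1) := by
  obtain ⟨hη0, hη1⟩ := hη
  obtain ⟨hβ0, hβ1⟩ := hβ
  have hb : (0:ℝ) < 1 - β := by linarith
  intro α₁ hα₁ α₂ hα₂ h12
  obtain ⟨hα₁l, hα₁r⟩ := hα₁
  obtain ⟨hα₂l, hα₂r⟩ := hα₂
  set x₁ := (1 - α₁) / (1 - β) with hx₁def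
  set x₂ := (1 - α₂) / (1 - β) with hx₂def
  have hx₁ : x₁ ∈ Set.Ioo (0:ℝ) 1 := by
    constructor
    · exact div_pos (by linarith) hb
    · rw [hx₁def, div_lt_one hb]; linarith
  have hx₂ : x₂ ∈ Set.Ioo (0:ℝ) 1 := by
    constructor
    · exact div_pos (by linarith) hb
    · rw [hx₂def, div_lt_one hb]; linarith
  set q₁ := erfinv x₁ with hq₁def
  set q₂ := erfinv x₂ with hq₂def
  have hq₁ : 0 < q₁ := PsiAux.erfinv_pos hx₁
  have hq₂ : 0 < q₂ := PsiAux.erfinv_pos hx₂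
  have he₁ : erf q₁ = x₁ := PsiAux.erfinv_spec hx₁
  have he₂ : erf q₂ = x₂ := PsiAux.erfinv_spec hx₂
  have hx21 : x₂ < x₁ := by
    rw [hx₁def, hx₂def, div_lt_div_iff₀ hb hb]
    nlinarith
  have hq21 : q₂ < q₁ := by
    by_contra h
    push_neg at h
    have := PsiAux.erf_strictMono.monotone h
    rw [he₁, he₂] at this
    linarith
  set a := 1 - η * β with hadef
  have hab : 1 - β < a := by rw [hadef]; nlinarith
  set F := fun q : ℝ => (a - (1 - β) * erf q) * (q * Real.exp (q ^ 2)) with hFdef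
  have hFlt : F q₂ < F q₁ :=
    PsiAux.F_strictMono hb hab (Set.mem_Ici.2 hq₂.le) (Set.mem_Ici.2 hq₁.le) hq21
  have hA₁ : a - (1 - β) * erf q₁ = α₁ - η * β := by
    rw [he₁, hx₁def, mul_div_cancel₀ _ (ne_of_gt hb)]; ring
  have hA₂ : a - (1 - β) * erf q₂ = α₂ - η * β := by
    rw [he₂, hx₂def, mul_div_cancel₀ _ (ne_of_gt hb)]; ring
  have hA₁pos : 0 < a - (1 - β) * erf q₁ := by rw [hA₁]; nlinarith
  have hA₂pos : 0 < a - (1 - β) * erf q₂ := by rw [hA₂]; nlinarith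
  have hF₂pos : 0 < F q₂ := by
    rw [hFdef]
    exact mul_pos hA₂pos (mul_pos hq₂ (Real.exp_pos _))
  set C := (1 - β) * Real.sqrt (2 / π) / Real.sqrt 2 with hCdef
  have hCpos : 0 < C := by
    rw [hCdef]
    have h2π : (0:ℝ) < 2 / π := by positivity
    have := Real.sqrt_pos.2 h2π
    have := Real.sqrt_pos.2 (by norm_num : (0:ℝ) < 2)
    positivity
  have hrw : ∀ (A q : ℝ), 0 < A → 0 < q →
      (1 - β) * Real.sqrt (2 / π) * Real.exp (-q ^ 2) / (A * Real.sqrt 2 * q)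
        = C / (A * (q * Real.exp (q ^ 2))) := by
    intro A q hA hq
    rw [Real.exp_neg, hCdef]
    have hs2 : Real.sqrt 2 ≠ 0 := ne_of_gt (Real.sqrt_pos.2 (by norm_num))
    field_simp
  calc (1 - β) * Real.sqrt (2 / π) * Real.exp (-q₁ ^ 2) / ((α₁ - η * β) * Real.sqrt 2 * q₁)
      = C / F q₁ := by rw [← hA₁]; exact hrw _ _ hA₁pos hq₁
    _ < C / F q₂ := div_lt_div_of_pos_left hCpos hF₂pos hFlt
    _ = (1 - β) * Real.sqrt (2 / π) * Real.exp (-q₂ ^ 2) / ((α₂ - η * β) * Real.sqrt 2 * q₂) := by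
        rw [← hA₂]; exact (hrw _ _ hA₂pos hq₂).symm
end

section
/- Fix a real constant c > 1. Then the equation (1/√π)·e^{-q²}/q − c·erfc(q) = 0 has a unique solution q₀ in (0, ∞), and this solution satisfies q₀ < 1/√(2c(c−1)). -/
open Real MeasureTheory Filter Set

noncomputable def Ig (x : ℝ) : ℝ := ∫ t in Set.Ioi x, Real.exp (-t ^ 2)

lemma gauss_cont : Continuous fun t : ℝ => Real.exp (-t ^ 2) := by
  continuity

lemma gauss_int : Integrable fun t : ℝ => Real.exp (-t ^ 2) := by
  have := integrable_exp_neg_mul_sq (b := 1) one_pos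
  simpa using this

lemma gauss_Ioi0 : Ig 0 = Real.sqrt π / 2 := by
  have := integral_gaussian_Ioi 1
  simpa [Ig] using this

lemma Ig_eq (x : ℝ) : Ig x = Real.sqrt π / 2 - ∫ t in (0:ℝ)..x, Real.exp (-t ^ 2) := by
  rcases le_or_gt 0 x with hx | hx
  · have hsplit : (∫ t in Set.Ioc 0 x, Real.exp (-t ^ 2)) + Ig x = Ig 0 := by
      rw [Ig, Ig, ← MeasureTheory.setIntegral_union (Ioc_disjoint_Ioi le_rfl) measurableSet_Ioi
        gauss_int.integrableOn gauss_int.integrableOn, Ioc_union_Ioi_eq_Ioi hx]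
    rw [intervalIntegral.integral_of_le hx]
    rw [gauss_Ioi0] at hsplit
    linarith
  · have hsplit : (∫ t in Set.Ioc x 0, Real.exp (-t ^ 2)) + Ig 0 = Ig x := by
      rw [Ig, Ig, ← MeasureTheory.setIntegral_union (Ioc_disjoint_Ioi le_rfl) measurableSet_Ioi
        gauss_int.integrableOn gauss_int.integrableOn, Ioc_union_Ioi_eq_Ioi hx.le]
    rw [intervalIntegral.integral_symm, intervalIntegral.integral_of_le hx.le]
    rw [gauss_Ioi0] at hsplit
    linarith

lemma Ig_hasDeriv (x : ℝ) : HasDerivAt Ig (-(Real.exp (-x ^ 2))) x := by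
  have h : HasDerivAt (fun u => ∫ t in (0:ℝ)..u, Real.exp (-t ^ 2)) (Real.exp (-x ^ 2)) x :=
    intervalIntegral.integral_hasDerivAt_right (gauss_cont.intervalIntegrable 0 x)
      (gauss_cont.stronglyMeasurableAtFilter _ _) gauss_cont.continuousAt
  have h2 := (hasDerivAt_const x (Real.sqrt π / 2)).sub h
  have hfun : (fun y : ℝ => Real.sqrt π / 2 - ∫ t in (0:ℝ)..y, Real.exp (-t ^ 2)) = Ig := by
    funext y; rw [Ig_eq]
  rw [← hfun]
  exact h2.congr_deriv (zero_sub _)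

lemma Ig_cont : Continuous Ig :=
  (Differentiable.continuous fun x => (Ig_hasDeriv x).differentiableAt)

lemma Ig_tendsto : Tendsto Ig atTop (nhds 0) := by
  have h := MeasureTheory.intervalIntegral_tendsto_integral_Ioi 0
    (gauss_int.integrableOn) tendsto_id
  have h2 : Tendsto (fun x => Real.sqrt π / 2 - ∫ t in (0:ℝ)..x, Real.exp (-t ^ 2)) atTop
      (nhds (Real.sqrt π / 2 - Ig 0)) := tendsto_const_nhds.sub h
  rw [gauss_Ioi0, sub_self] at h2
  exact h2.congr fun x => (Ig_eq x).symm

lemma sqrt_two_add_sq_gt (x : ℝ) : x < Real.sqrt (x ^ 2 + 2) := by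
  rcases le_or_gt x 0 with hx | hx
  · exact lt_of_le_of_lt hx (Real.sqrt_pos.2 (by positivity))
  · have h := Real.sqrt_lt_sqrt (sq_nonneg x) (by linarith : x ^ 2 < x ^ 2 + 2)
    rwa [Real.sqrt_sq hx.le] at h

lemma aux_upos (x : ℝ) : 0 < x + Real.sqrt (x ^ 2 + 2) := by
  have h := sqrt_two_add_sq_gt (-x)
  have h2 := sqrt_two_add_sq_gt x
  rw [neg_pow] at h
  simp at h
  linarith

noncomputable def hK (x : ℝ) : ℝ := Ig x - Real.exp (-x ^ 2) / (x + Real.sqrt (x ^ 2 + 2))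

lemma exp_neg_sq_hasDeriv (x : ℝ) :
    HasDerivAt (fun y : ℝ => Real.exp (-y ^ 2)) (Real.exp (-x ^ 2) * -(2 * x)) x := by
  have := (hasDerivAt_pow 2 x).neg.exp
  simpa using this

lemma hK_hasDeriv (x : ℝ) : HasDerivAt hK
    (-(Real.exp (-x ^ 2)) - ((Real.exp (-x ^ 2) * -(2 * x)) * (x + Real.sqrt (x ^ 2 + 2))
      - Real.exp (-x ^ 2) * (1 + (2 * x) / (2 * Real.sqrt (x ^ 2 + 2))))
      / (x + Real.sqrt (x ^ 2 + 2)) ^ 2) x := by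
  have hs2 : (0:ℝ) < x ^ 2 + 2 := by positivity
  have hsq : HasDerivAt (fun y : ℝ => y ^ 2 + 2) (2 * x) x := by
    simpa using (hasDerivAt_pow 2 x).add_const 2
  have hsqrt : HasDerivAt (fun y : ℝ => Real.sqrt (y ^ 2 + 2))
      ((2 * x) / (2 * Real.sqrt (x ^ 2 + 2))) x := hsq.sqrt hs2.ne'
  have hu : HasDerivAt (fun y : ℝ => y + Real.sqrt (y ^ 2 + 2))
      (1 + (2 * x) / (2 * Real.sqrt (x ^ 2 + 2))) x := (hasDerivAt_id x).add hsqrt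
  have hg := (exp_neg_sq_hasDeriv x).div hu (aux_upos x).ne'
  exact (Ig_hasDeriv x).sub hg

lemma hK_deriv_neg (x : ℝ) : deriv hK x < 0 := by
  rw [(hK_hasDeriv x).deriv]
  set s := Real.sqrt (x ^ 2 + 2) with hs
  have hspos : 0 < s := Real.sqrt_pos.2 (by positivity)
  have hs2 : s ^ 2 = x ^ 2 + 2 := Real.sq_sqrt (by positivity)
  have hxs : x < s := sqrt_two_add_sq_gt x
  have hupos : 0 < x + s := aux_upos x
  have he : 0 < Real.exp (-x ^ 2) := Real.exp_pos _
  have key : -(Real.exp (-x ^ 2)) - ((Real.exp (-x ^ 2) * -(2 * x)) * (x + s)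
      - Real.exp (-x ^ 2) * (1 + (2 * x) / (2 * s))) / (x + s) ^ 2
      = Real.exp (-x ^ 2) * (x / s - 1) / (x + s) ^ 2 := by
    field_simp
    linear_combination (-s) * hs2
  rw [key]
  apply div_neg_of_neg_of_pos _ (by positivity)
  apply mul_neg_of_pos_of_neg he
  rw [sub_neg, div_lt_one hspos]
  exact hxs

lemma hK_tendsto : Tendsto hK atTop (nhds 0) := by
  have h1 : Tendsto (fun x : ℝ => Real.exp (-x ^ 2)) atTop (nhds 0) := by
    have : Tendsto (fun x : ℝ => -x ^ 2) atTop atBot := by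
      apply tendsto_neg_atBot_iff.2
      exact tendsto_pow_atTop two_ne_zero
    exact Real.tendsto_exp_atBot.comp this
  have h2 : Tendsto (fun x : ℝ => x + Real.sqrt (x ^ 2 + 2)) atTop atTop :=
    tendsto_atTop_mono (fun x => le_add_of_nonneg_right (Real.sqrt_nonneg _)) tendsto_id
  have h3 := h1.div_atTop h2
  have := Ig_tendsto.sub h3
  exact (by simpa using this : Tendsto (fun x => Ig x - Real.exp (-x ^ 2) / (x + Real.sqrt (x ^ 2 + 2))) atTop (nhds 0))

lemma hK_strictAnti : StrictAnti hK :=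
  strictAnti_of_deriv_neg hK_deriv_neg

lemma hK_pos (x : ℝ) : 0 < hK x := by
  have hge : ∀ y : ℝ, 0 ≤ hK y := by
    intro y
    refine le_of_tendsto hK_tendsto ?_
    filter_upwards [eventually_ge_atTop y] with z hz
    exact hK_strictAnti.antitone hz
  have := hK_strictAnti (lt_add_one x)
  have := hge (x + 1)
  linarith

lemma komatsu_s10 (x : ℝ) : Real.exp (-x ^ 2) / (x + Real.sqrt (x ^ 2 + 2)) < Ig x := by
  have := hK_pos x
  simp only [hK] at this
  linarith

noncomputable def Fc (c q : ℝ) : ℝ := 1 / Real.sqrt π * Real.exp (-q ^ 2) / q - c * erfc q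

lemma erfc_eq (q : ℝ) : erfc q = 2 / Real.sqrt π * Ig q := rfl

theorem unique_root_q0 (c : ℝ) (hc : 1 < c) :
    (∃! q₀ : ℝ, 0 < q₀ ∧ (1 / Real.sqrt π) * Real.exp (-q₀ ^ 2) / q₀ - c * erfc q₀ = 0) ∧
    ∀ q₀ : ℝ, 0 < q₀ → (1 / Real.sqrt π) * Real.exp (-q₀ ^ 2) / q₀ - c * erfc q₀ = 0 →
      q₀ < 1 / Real.sqrt (2 * c * (c - 1)) := by
  have hπ : 0 < Real.sqrt π := Real.sqrt_pos.2 Real.pi_pos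
  have hπ1 : 1 ≤ Real.sqrt π := by
    rw [show (1:ℝ) = Real.sqrt 1 by simp]
    exact Real.sqrt_le_sqrt (by linarith [Real.pi_gt_three])
  have hc0 : 0 < c := by linarith
  have hA : (0:ℝ) < 2 * c * (c - 1) := by nlinarith
  set b : ℝ := 1 / Real.sqrt (2 * c * (c - 1)) with hbdef
  have hsA : 0 < Real.sqrt (2 * c * (c - 1)) := Real.sqrt_pos.2 hA
  have hbpos : 0 < b := by positivity
  have hb2 : b ^ 2 * (2 * c * (c - 1)) = 1 := by
    rw [hbdef, div_pow, one_pow, Real.sq_sqrt hA.le]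
    field_simp
    exact div_self (by linarith)
  -- F is negative on [b, ∞)
  have hneg : ∀ q : ℝ, b ≤ q → Fc c q < 0 := by
    intro q hq
    have hqpos : 0 < q := lt_of_lt_of_le hbpos hq
    set s := Real.sqrt (q ^ 2 + 2) with hs
    have hspos : 0 < s := Real.sqrt_pos.2 (by positivity)
    have hs2 : s ^ 2 = q ^ 2 + 2 := Real.sq_sqrt (by positivity)
    have he : 0 < Real.exp (-q ^ 2) := Real.exp_pos _
    have hq2 : b ^ 2 ≤ q ^ 2 := by nlinarith
    have hsle : s ≤ (2 * c - 1) * q := by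
      have h1 : q ^ 2 + 2 ≤ ((2 * c - 1) * q) ^ 2 := by nlinarith [hb2, hq2]
      calc s = Real.sqrt (q ^ 2 + 2) := hs
        _ ≤ Real.sqrt (((2 * c - 1) * q) ^ 2) := Real.sqrt_le_sqrt h1
        _ = (2 * c - 1) * q := Real.sqrt_sq (by nlinarith)
    have hKq := komatsu_s10 q
    rw [← hs] at hKq
    have hupos : 0 < q + s := by positivity
    have h1 : 1 / Real.sqrt π * Real.exp (-q ^ 2) / q ≤
        2 * c / Real.sqrt π * (Real.exp (-q ^ 2) / (q + s)) := by
      rw [← sub_nonneg]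
      have hkey : 2 * c / Real.sqrt π * (Real.exp (-q ^ 2) / (q + s)) -
          1 / Real.sqrt π * Real.exp (-q ^ 2) / q
          = Real.exp (-q ^ 2) * (2 * c * q - (q + s)) / (Real.sqrt π * q * (q + s)) := by
        field_simp
      rw [hkey]
      apply div_nonneg (mul_nonneg he.le (by nlinarith)) (by positivity)
    have h2 : 2 * c / Real.sqrt π * (Real.exp (-q ^ 2) / (q + s)) <
        2 * c / Real.sqrt π * Ig q :=
      mul_lt_mul_of_pos_left hKq (by positivity)
    have h3 : c * erfc q = 2 * c / Real.sqrt π * Ig q := by rw [erfc_eq]; ring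
    show 1 / Real.sqrt π * Real.exp (-q ^ 2) / q - c * erfc q < 0
    rw [h3]
    linarith
  -- derivative of F
  have hFderiv : ∀ q : ℝ, q ≠ 0 → HasDerivAt (Fc c)
      ((1 / Real.sqrt π * (Real.exp (-q ^ 2) * -(2 * q)) * q
        - 1 / Real.sqrt π * Real.exp (-q ^ 2) * 1) / q ^ 2
        - c * (2 / Real.sqrt π * -(Real.exp (-q ^ 2)))) q := by
    intro q hq
    have h1 : HasDerivAt (fun y : ℝ => 1 / Real.sqrt π * Real.exp (-y ^ 2))
        (1 / Real.sqrt π * (Real.exp (-q ^ 2) * -(2 * q))) q :=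
      (exp_neg_sq_hasDeriv q).const_mul _
    have h2 := h1.div (hasDerivAt_id q) hq
    have h3 : HasDerivAt (fun y : ℝ => c * erfc y)
        (c * (2 / Real.sqrt π * -(Real.exp (-q ^ 2)))) q :=
      ((Ig_hasDeriv q).const_mul (2 / Real.sqrt π)).const_mul c
    exact h2.sub h3
  -- continuity of F away from 0
  have hFcont : ContinuousOn (Fc c) (Ioc 0 b) := by
    intro x hx
    exact ((hFderiv x hx.1.ne').differentiableAt.continuousAt).continuousWithinAt
  -- strict antitonicity on (0, b]
  have hanti : StrictAntiOn (Fc c) (Ioc 0 b) := by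
    apply strictAntiOn_of_deriv_neg (convex_Ioc 0 b) hFcont
    intro q hq
    rw [interior_Ioc] at hq
    obtain ⟨hq0, hqb⟩ := hq
    rw [(hFderiv q hq0.ne').deriv]
    have he : 0 < Real.exp (-q ^ 2) := Real.exp_pos _
    have hq2 : q ^ 2 < b ^ 2 := by nlinarith
    have hkey : (1 / Real.sqrt π * (Real.exp (-q ^ 2) * -(2 * q)) * q
        - 1 / Real.sqrt π * Real.exp (-q ^ 2) * 1) / q ^ 2
        - c * (2 / Real.sqrt π * -(Real.exp (-q ^ 2)))
        = Real.exp (-q ^ 2) * ((2 * c - 2) * q ^ 2 - 1) / (Real.sqrt π * q ^ 2) := by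
      have hππ : Real.sqrt π ^ 2 = π := Real.sq_sqrt Real.pi_pos.le
      field_simp
      ring
    rw [hkey]
    apply div_neg_of_neg_of_pos _ (by positivity)
    apply mul_neg_of_pos_of_neg he
    nlinarith [hb2, hq2, hc0]
  -- choose a small positive point where F is positive
  set a : ℝ := min b (Real.exp (-1) / (Real.sqrt π * (c + 1))) with hadef
  have hapos : 0 < a := lt_min hbpos (by positivity)
  have ha1 : a ≤ Real.exp (-1) / (Real.sqrt π * (c + 1)) := min_le_right _ _
  have haone : a ≤ 1 := by
    have h1 : Real.exp (-1) ≤ 1 := by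
      have := Real.exp_lt_one_iff.mpr (by norm_num : (-1:ℝ) < 0)
      linarith
    have h2 : (1:ℝ) ≤ Real.sqrt π * (c + 1) := by nlinarith
    have : Real.exp (-1) / (Real.sqrt π * (c + 1)) ≤ 1 := by
      rw [div_le_one (by positivity)]
      linarith
    linarith
  have herfc_le : erfc a ≤ 1 := by
    have hsub : Ig a ≤ Ig 0 := by
      apply MeasureTheory.setIntegral_mono_set gauss_int.integrableOn
        (ae_of_all _ fun t => (Real.exp_pos _).le)
        (HasSubset.Subset.eventuallyLE (Ioi_subset_Ioi hapos.le))
    rw [gauss_Ioi0] at hsub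
    rw [erfc_eq]
    calc 2 / Real.sqrt π * Ig a ≤ 2 / Real.sqrt π * (Real.sqrt π / 2) := by
          apply mul_le_mul_of_nonneg_left hsub (by positivity)
      _ = 1 := by field_simp
  have hFa : 0 < Fc c a := by
    have h1 : Real.exp (-1) ≤ Real.exp (-a ^ 2) := Real.exp_le_exp.2 (by nlinarith)
    have hkey : c + 1 ≤ 1 / Real.sqrt π * Real.exp (-a ^ 2) / a := by
      rw [le_div_iff₀ hapos]
      rw [le_div_iff₀ (by positivity : 0 < Real.sqrt π * (c + 1))] at ha1
      rw [one_div, inv_mul_eq_div, le_div_iff₀ hπ]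
      nlinarith [ha1, h1]
    have h2 : c * erfc a ≤ c := mul_le_of_le_one_right hc0.le herfc_le
    show 0 < 1 / Real.sqrt π * Real.exp (-a ^ 2) / a - c * erfc a
    linarith
  have hab : a ≤ b := min_le_left _ _
  have hFb : Fc c b < 0 := hneg b le_rfl
  have hcont' : ContinuousOn (Fc c) (Icc a b) :=
    hFcont.mono fun x hx => ⟨lt_of_lt_of_le hapos hx.1, hx.2⟩
  obtain ⟨q₀, hq₀mem, hq₀⟩ := intermediate_value_Icc' hab hcont' ⟨hFb.le, hFa.le⟩
  have hq₀pos : 0 < q₀ := lt_of_lt_of_le hapos hq₀mem.1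
  have hq₀ltb : q₀ < b := by
    rcases lt_or_eq_of_le hq₀mem.2 with h | h
    · exact h
    · rw [h] at hq₀; exact absurd hq₀ hFb.ne
  have huniq : ∀ y : ℝ, 0 < y → Fc c y = 0 → y = q₀ := by
    intro y hy hFy
    have hyb : y ≤ b := by
      by_contra h
      exact absurd hFy (hneg y (not_le.1 h).le).ne
    exact hanti.injOn ⟨hy, hyb⟩ ⟨hq₀pos, hq₀mem.2⟩ (hFy.trans hq₀.symm)
  constructor
  · exact ⟨q₀, ⟨hq₀pos, hq₀⟩, fun y hy => huniq y hy.1 hy.2⟩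
  · intro q hq hFq
    have : q = q₀ := huniq q hq hFq
    rw [this]
    exact hq₀ltb
end

section
/- Let γ > 0, ν ≥ 0, and c be real with 0 ≤ c/(2γ) < 1. Then (1/√(2π))·∫_{-∞}^{∞} e^{-h²/2}·e^{c·max(|h|−ν, 0)²/(4γ)} dh = exp((c·ν²/(4γ))/(1 − c/(2γ)))/√(1 − c/(2γ)) · erfc( ν / (√2·√(1 − c/(2γ))) ) + erf( ν/√2 ). -/
open Real MeasureTheory Filter Set

lemma integral_Ioi_comp_add_right (g : ℝ → ℝ) (A d : ℝ) :
    ∫ x in Ioi A, g (x + d) = ∫ x in Ioi (A + d), g x := by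
  rw [← integral_indicator measurableSet_Ioi, ← integral_indicator measurableSet_Ioi,
    ← integral_add_right_eq_self (Set.indicator (Ioi (A + d)) g) d]
  congr 1 with x
  simp [Set.indicator_apply, mem_Ioi]

theorem gaussian_integral_w1 (γ ν c : ℝ) (hγ : 0 < γ) (hν : 0 ≤ ν)
    (hc0 : 0 ≤ c / (2 * γ)) (hc1 : c / (2 * γ) < 1) :
    (1 / Real.sqrt (2 * π)) *
        ∫ h : ℝ, Real.exp (-h ^ 2 / 2) * Real.exp (c * max (|h| - ν) 0 ^ 2 / (4 * γ)) =
      Real.exp ((c * ν ^ 2 / (4 * γ)) / (1 - c / (2 * γ))) / Real.sqrt (1 - c / (2 * γ)) *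
          erfc (ν / (Real.sqrt 2 * Real.sqrt (1 - c / (2 * γ)))) +
        erf (ν / Real.sqrt 2) := by
  have hg : γ ≠ 0 := hγ.ne'
  set a : ℝ := c / (2 * γ) with ha
  have h1a : 0 < 1 - a := by linarith
  have h2c : 2 * γ - c ≠ 0 := by
    have := (div_lt_one (by linarith : (0:ℝ) < 2 * γ)).mp hc1
    linarith
  set b : ℝ := (1 - a) / 2 with hbdef
  have hb : 0 < b := by rw [hbdef]; linarith
  set d : ℝ := a * ν / (1 - a) with hd
  set E : ℝ := Real.exp (a * ν ^ 2 / (2 * (1 - a))) with hE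
  set F : ℝ → ℝ := fun u => Real.exp (-u ^ 2 / 2) * Real.exp (c * max (u - ν) 0 ^ 2 / (4 * γ))
    with hF
  have hFcont : Continuous F := by
    rw [hF]; fun_prop
  -- key pointwise identity on [ν, ∞)
  have key : ∀ u : ℝ, Real.exp (-u ^ 2 / 2) * Real.exp (c * (u - ν) ^ 2 / (4 * γ)) =
      E * Real.exp (-(b * (u + d) ^ 2)) := by
    intro u
    rw [hE, ← Real.exp_add, ← Real.exp_add]
    congr 1
    rw [hbdef, hd, ha]
    have h1 : (1 - c / (2 * γ)) = (2 * γ - c) / (2 * γ) := by field_simp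
    rw [h1]
    field_simp
    ring
  have keyF : ∀ u ∈ Ioi ν, F u = E * Real.exp (-(b * (u + d) ^ 2)) := by
    intro u hu
    rw [hF]
    dsimp only
    rw [max_eq_left (by simp only [mem_Ioi] at hu; linarith)]
    exact key u
  -- integrability
  have hgauss : Integrable (fun u : ℝ => Real.exp (-(b * (u + d) ^ 2))) := by
    have hmp := measurePreserving_add_right (volume : Measure ℝ) d
    have hint : Integrable (fun x : ℝ => Real.exp (-b * x ^ 2)) := integrable_exp_neg_mul_sq hb
    have := (hmp.integrable_comp hint.aestronglyMeasurable).mpr hint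
    simpa [Function.comp_def, neg_mul] using this
  have hIoc : IntegrableOn F (Ioc 0 ν) := hFcont.integrableOn_Ioc
  have hIoi : IntegrableOn F (Ioi ν) := by
    apply ((hgauss.const_mul E).integrableOn).congr_fun ?_ measurableSet_Ioi
    intro u hu
    exact (keyF u hu).symm
  -- reduce whole-line integral to Ioi 0
  have habs : (∫ h : ℝ, Real.exp (-h ^ 2 / 2) * Real.exp (c * max (|h| - ν) 0 ^ 2 / (4 * γ)))
      = 2 * ∫ u in Ioi (0:ℝ), F u := by
    rw [show (fun h : ℝ => Real.exp (-h ^ 2 / 2) * Real.exp (c * max (|h| - ν) 0 ^ 2 / (4 * γ)))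
        = fun h : ℝ => F |h| from by funext h; rw [hF]; simp [sq_abs]]
    exact integral_comp_abs
  -- split
  have hsplit : ∫ u in Ioi (0:ℝ), F u = (∫ u in Ioc 0 ν, F u) + ∫ u in Ioi ν, F u := by
    rw [← setIntegral_union (Ioc_disjoint_Ioi le_rfl) measurableSet_Ioi hIoc hIoi,
      Ioc_union_Ioi_eq_Ioi hν]
  -- first piece
  have hs2 : Real.sqrt 2 ≠ 0 := by positivity
  have hI1 : ∫ u in Ioc 0 ν, F u
      = Real.sqrt 2 * ∫ t in (0:ℝ)..(ν / Real.sqrt 2), Real.exp (-t ^ 2) := by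
    have e1 : ∫ u in Ioc 0 ν, F u = ∫ u in Ioc 0 ν, Real.exp (-(u / Real.sqrt 2) ^ 2) := by
      apply setIntegral_congr_fun measurableSet_Ioc
      intro u hu
      rw [hF]
      dsimp only
      rw [max_eq_right (by linarith [hu.2])]
      simp only [pow_two, ne_eq, OfNat.ofNat_ne_zero, not_false_eq_true]
      rw [div_mul_div_comm, Real.mul_self_sqrt (by norm_num : (0:ℝ) ≤ 2)]
      simp [neg_div]
    rw [e1, ← intervalIntegral.integral_of_le hν,
      intervalIntegral.integral_comp_div (fun t => Real.exp (-t ^ 2)) hs2]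
    simp
  -- second piece
  have hend : Real.sqrt b * (ν + d) = ν / (Real.sqrt 2 * Real.sqrt (1 - a)) := by
    have h1 : Real.sqrt (1 - a) ≠ 0 := (Real.sqrt_pos.mpr h1a).ne'
    have hν1 : ν + d = ν / (1 - a) := by rw [hd]; field_simp; ring
    have hsb2 : Real.sqrt b = Real.sqrt (1 - a) / Real.sqrt 2 := by
      rw [hbdef, Real.sqrt_div h1a.le]
    rw [hν1, hsb2]
    have hms : Real.sqrt (1 - a) * Real.sqrt (1 - a) = 1 - a := Real.mul_self_sqrt h1a.le
    rw [div_mul_div_comm, div_eq_div_iff (mul_ne_zero hs2 h1a.ne') (mul_ne_zero hs2 h1)]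
    linear_combination (ν * Real.sqrt 2) * hms
  have hI2 : ∫ u in Ioi ν, F u
      = E * ((Real.sqrt b)⁻¹ *
          ∫ t in Ioi (ν / (Real.sqrt 2 * Real.sqrt (1 - a))), Real.exp (-t ^ 2)) := by
    rw [setIntegral_congr_fun measurableSet_Ioi keyF, integral_const_mul]
    congr 1
    rw [integral_Ioi_comp_add_right (fun x => Real.exp (-(b * x ^ 2))) ν d]
    have hsb : (0:ℝ) < Real.sqrt b := Real.sqrt_pos.mpr hb
    have e2 : ∀ x : ℝ, Real.exp (-(b * x ^ 2)) =
        (fun t => Real.exp (-t ^ 2)) (Real.sqrt b * x) := by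
      intro x
      simp only
      rw [mul_pow, Real.sq_sqrt hb.le]
    simp_rw [e2]
    rw [integral_comp_mul_left_Ioi (fun t => Real.exp (-t ^ 2)) _ hsb, smul_eq_mul, hend]
  -- exponent equality
  have hEE : Real.exp ((c * ν ^ 2 / (4 * γ)) / (1 - c / (2 * γ))) = E := by
    rw [hE, ha]
    congr 1
    field_simp
    ring
  -- assemble
  rw [habs, hsplit, hI1, hI2, hEE, erf, erfc]
  have hsπ : Real.sqrt π ≠ 0 := by positivity
  have hs1a : Real.sqrt (1 - a) ≠ 0 := (Real.sqrt_pos.mpr h1a).ne'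
  have hsbne : Real.sqrt b ≠ 0 := (Real.sqrt_pos.mpr hb).ne'
  have h2π : Real.sqrt (2 * π) = Real.sqrt 2 * Real.sqrt π :=
    Real.sqrt_mul (by norm_num) π
  have hbsplit : Real.sqrt 2 * Real.sqrt b = Real.sqrt (1 - a) := by
    rw [hbdef, Real.sqrt_div h1a.le]
    field_simp
  rw [h2π]
  field_simp
  linear_combination (-(E * (∫ t in Ioi (ν / (Real.sqrt 2 * Real.sqrt (1 - a))),
      Real.exp (-t ^ 2)))) * hbsplit
end
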